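/- arXiv:2403.12919 — 5 statements merged into one kernel-verified Lean document; each statement's English description precedes it below -/
import Mathlib

section
/- Let t ≥ 3 be an integer and let ε, δ ∈ (0,1) satisfy ε < 1/2 and (δ−ε)^{t−1} > (t+1)ε. Let G be a K_t-free finite simple graph, let V₁, …, V_r be pairwise disjoint nonempty vertex subsets of G, and suppose α(G) < 2ε·min_{i∈S₁}|V_i|. Suppose S₂ ⊆ S₁ ⊆ [r] are index sets such that: (i) for all distinct i,j ∈ S₁ the pair (V_i,V_j) is ε-regular with edge density d(V_i,V_j) > δ; and (ii) for all distinct i,j ∈ S₂ the edge density satisfies d(V_i,V_j) > 1/2 + δ. Then G contains a clique of order |S₁| + |S₂|; in particular, |S₁| + |S₂| < t. -/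
open Filter

structure WeightedGraph (V : Type) [Fintype V] where
  vw : V → ℝ
  ew : V → V → ℝ
  vw_nonneg : ∀ v, 0 ≤ vw v
  vw_le_one : ∀ v, vw v ≤ 1
  vw_sum : ∑ v, vw v = 1
  ew_nonneg : ∀ u v, 0 ≤ ew u v
  ew_le_one : ∀ u v, ew u v ≤ 1
  ew_symm : ∀ u v, ew u v = ew v u
  ew_self : ∀ v, ew v v = 0

namespace WeightedGraph

variable {V : Type} [Fintype V]

/-- The `K_m`-density of a weighted graph. -/
noncomputable def density (R : WeightedGraph V) (m : ℕ) : ℝ :=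
  ∑ σ : Fin m → V, (∏ i, R.vw (σ i)) *
    ∏ p ∈ Finset.univ.filter (fun p : Fin m × Fin m => p.1 < p.2), R.ew (σ p.1) (σ p.2)

/-- The simple graph `R_{>α}` of edges of weight greater than `α`. -/
def gtGraph (R : WeightedGraph V) (α : ℝ) : SimpleGraph V where
  Adj u v := u ≠ v ∧ α < R.ew u v
  symm := by
    constructor
    intro u v h
    refine ⟨h.1.symm, ?_⟩
    rw [R.ew_symm v u]
    exact h.2
  loopless := by constructor; intro v h; exact h.1 rfl

/-- `R` is `𝒦_t`-free. -/
def KtFree (R : WeightedGraph V) (t : ℕ) : Prop :=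
  ¬ ∃ S₁ S₂ : Finset V, S₂ ⊆ S₁ ∧ 1 ≤ S₂.card ∧ S₁.card + S₂.card = t ∧
      (R.gtGraph 0).IsClique (S₁ : Set V) ∧ (R.gtGraph (1/2)).IsClique (S₂ : Set V)

/-- The conditions (A1)–(A5) on a partition function `part`, for a `(b,a)`-partition
with the number of parts `a` implicit in the type of `part`. -/
def IsBAPartition (R : WeightedGraph V) (s : ℕ) {a : ℕ} (part : V → Fin a) : Prop :=
  Function.Surjective part ∧
  (∀ u v : V, u ≠ v → R.ew u v = 1/2 ∨ R.ew u v = 1) ∧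
  (∀ u v : V, u ≠ v → (R.ew u v = 1/2 ↔ part u = part v)) ∧
  (∀ u v : V, part u = part v → R.vw u = R.vw v) ∧
  (∀ i j : Fin a, (Finset.univ.filter fun x => part x = i).card ≤
      (Finset.univ.filter fun x => part x = j).card + 1) ∧
  (∀ u v : V, (Finset.univ.filter fun x => part x = part v).card ≤
      (Finset.univ.filter fun x => part x = part u).card → R.vw u ≤ R.vw v) ∧
  ((a = 1 ∧ ∀ i : Fin a, (Finset.univ.filter fun x => part x = i).card = s) ∨
   (2 ≤ a ∧ ∀ i : Fin a, (Finset.univ.filter fun x => part x = i).card ≤ s - 1))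

/-- `R` admits a `(b,a)`-partition (with clique parameter `s`). -/
def AdmitsPartition (R : WeightedGraph V) (s b a : ℕ) : Prop :=
  Fintype.card V = b ∧ 1 ≤ a ∧ ∃ part : V → Fin a, R.IsBAPartition s part

end WeightedGraph

/-- `π_s(𝒦_t)`: the supremum of the `K_s`-density over all `𝒦_t`-free weighted graphs. -/
noncomputable def piSup (s t : ℕ) : ℝ :=
  sSup {x : ℝ | ∃ (V : Type) (_ : Fintype V) (R : WeightedGraph V),
    R.KtFree t ∧ R.density s = x}

/-- The independence number of a simple graph. -/
noncomputable def indepNum {α : Type*} (G : SimpleGraph α) : ℕ :=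
  sSup {k : ℕ | ∃ S : Finset α, (Gᶜ).IsNClique k S}

/-- The number `N(K_s, G)` of `s`-cliques of `G`. -/
noncomputable def cliqueCount {α : Type*} (G : SimpleGraph α) (s : ℕ) : ℕ :=
  Set.ncard {S : Finset α | G.IsNClique s S}

/-- The Ramsey–Turán number `RT(n, K_s, K_t, ℓ)`. -/
noncomputable def RT (n s t : ℕ) (ℓ : ℝ) : ℕ :=
  sSup {N : ℕ | ∃ G : SimpleGraph (Fin n),
    G.CliqueFree t ∧ ((indepNum G : ℝ) < ℓ) ∧ N = cliqueCount G s}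
open Finset in

lemma indep_bound {α : Type} [Fintype α] (G : SimpleGraph α) (S : Finset α)
    (h : indepNum G < S.card) : ∃ u ∈ S, ∃ v ∈ S, G.Adj u v := by
  by_contra hc
  push_neg at hc
  have hcl : (Gᶜ).IsNClique S.card S := by
    constructor
    · intro u hu v hv huv
      exact ⟨huv, hc u hu v hv⟩
    · rfl
  have hb : BddAbove {k : ℕ | ∃ S : Finset α, (Gᶜ).IsNClique k S} := by
    refine ⟨Fintype.card α, fun k hk => ?_⟩
    obtain ⟨T, hT⟩ := hk
    rw [← hT.2]
    exact Finset.card_le_univ T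
  have : S.card ≤ indepNum G := le_csSup hb ⟨S, hcl⟩
  omega

lemma card_interedges_sum {α : Type} [DecidableEq α] (G : SimpleGraph α) [DecidableRel G.Adj]
    (s t : Finset α) :
    (G.interedges s t).card = ∑ x ∈ s, (t.filter (G.Adj x)).card := by
  rw [SimpleGraph.interedges, Rel.interedges_eq_biUnion, Finset.card_biUnion]
  · simp
  · intro x hx y hy hxy
    simp only [Finset.disjoint_left, Finset.mem_map, Function.Embedding.coeFn_mk]
    rintro ⟨a, b⟩ ⟨c, hc, h1⟩ ⟨d, hd, h2⟩
    rw [Prod.ext_iff] at h1 h2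
    exact hxy (h1.1.trans h2.1.symm)

lemma bad_small {α : Type} [DecidableEq α] (G : SimpleGraph α) [DecidableRel G.Adj] {ε : ℝ}
    (hε : 0 < ε) {s t C : Finset α} (hs : s.Nonempty) (hunif : G.IsUniform ε s t) (hCt : C ⊆ t)
    (hC : ε * (t.card : ℝ) ≤ (C.card : ℝ)) (B : Finset α) (hBs : B ⊆ s)
    (hBad : ∀ x ∈ B, ((C.filter (G.Adj x)).card : ℝ) < ((G.edgeDensity s t : ℝ) - ε) * (C.card : ℝ)) :
    (B.card : ℝ) < ε * (s.card : ℝ) := by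
  by_contra hcon
  push_neg at hcon
  have hspos : 0 < (s.card : ℝ) := by exact_mod_cast Finset.card_pos.2 hs
  have hBpos : 0 < (B.card : ℝ) := lt_of_lt_of_le (by positivity) hcon
  have hBne : B.Nonempty := Finset.card_pos.1 (by exact_mod_cast hBpos)
  obtain ⟨x0, hx0⟩ := hBne
  have hCpos : 0 < (C.card : ℝ) := by
    by_contra hcp
    push_neg at hcp
    have h0 : (C.card : ℝ) = 0 := le_antisymm hcp (by positivity)
    have := hBad x0 hx0
    rw [h0, mul_zero] at this
    exact absurd this (not_lt.2 (by positivity))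
  have key := hunif hBs hCt (by linarith [mul_comm ε (s.card : ℝ)])
    (by linarith [mul_comm ε (t.card : ℝ)])
  have hsum : ((G.interedges B C).card : ℝ) <
      ((G.edgeDensity s t : ℝ) - ε) * (C.card : ℝ) * (B.card : ℝ) := by
    rw [card_interedges_sum]
    push_cast
    calc ∑ x ∈ B, ((C.filter (G.Adj x)).card : ℝ)
        < ∑ _x ∈ B, ((G.edgeDensity s t : ℝ) - ε) * (C.card : ℝ) :=
          Finset.sum_lt_sum_of_nonempty ⟨x0, hx0⟩ hBad
      _ = _ := by rw [Finset.sum_const, nsmul_eq_mul]; ring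
  have hden : (G.edgeDensity B C : ℝ) = ((G.interedges B C).card : ℝ) / ((B.card : ℝ) * (C.card : ℝ)) := by
    rw [SimpleGraph.edgeDensity_def]
    push_cast
    ring
  have hlt : (G.edgeDensity B C : ℝ) < (G.edgeDensity s t : ℝ) - ε := by
    rw [hden, div_lt_iff₀ (by positivity)]
    nlinarith
  have := abs_lt.1 key
  linarith [this.1]

set_option maxHeartbeats 2000000 in
lemma core {α : Type} [Fintype α] [DecidableEq α]
    (t : ℕ) (ht : 3 ≤ t) (ε δ : ℝ)
    (hε0 : 0 < ε) (hεδ : ε < δ) (hδ1 : δ < 1)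
    (hpow : ((t : ℝ) + 1) * ε < (δ - ε) ^ (t - 1))
    (G : SimpleGraph α) [DecidableRel G.Adj]
    (r : ℕ) (Vset : Fin r → Finset α)
    (hne : ∀ i : Fin r, (Vset i).Nonempty)
    (S₁ S₂ : Finset (Fin r))
    (hα : ∀ i ∈ S₁, (indepNum G : ℝ) < 2 * ε * ((Vset i).card : ℝ))
    (hreg : ∀ i ∈ S₁, ∀ j ∈ S₁, i ≠ j →
      G.IsUniform ε (Vset i) (Vset j) ∧ δ < (G.edgeDensity (Vset i) (Vset j) : ℝ))
    (hdens : ∀ i ∈ S₂, ∀ j ∈ S₂, i ≠ j →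
      1/2 + δ < (G.edgeDensity (Vset i) (Vset j) : ℝ)) :
    ∀ N : ℕ, ∀ T₁ T₂ : Finset (Fin r), T₁.card + T₂.card = N →
      T₂ ⊆ T₁ → T₁ ⊆ S₁ → T₂ ⊆ S₂ →
      ∀ m : ℕ, m + N ≤ t →
      ∀ C : Fin r → Finset α,
      (∀ i ∈ T₁, C i ⊆ Vset i) →
      (∀ i ∈ T₁, (δ - ε) ^ m * ((Vset i).card : ℝ) ≤ ((C i).card : ℝ)) →
      ∃ K : Finset α, G.IsNClique N K ∧ ∀ v ∈ K, ∃ i ∈ T₁, v ∈ C i := by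
  classical
  have hde0 : (0 : ℝ) < δ - ε := by linarith
  have hde1 : δ - ε ≤ 1 := by linarith
  have ht4 : (4 : ℝ) ≤ (t : ℝ) + 1 := by exact_mod_cast Nat.succ_le_succ ht
  intro N
  induction N using Nat.strong_induction_on with
  | _ N IH =>
  intro T₁ T₂ hN hsub21 hsubT1 hsubT2 m hm C hCsub hCcard
  rcases Finset.eq_empty_or_nonempty T₁ with hT1e | hT1ne
  · -- base case
    have hT2e : T₂ = ∅ := Finset.subset_empty.1 (hT1e ▸ hsub21)
    have hN0 : N = 0 := by simp [hT1e, hT2e] at hN; omega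
    exact ⟨∅, by simp [hN0], by simp⟩
  · -- pick an index i (prefer T₁ \ T₂)
    have key : ∀ i ∈ T₁, ∃ Good : Finset α, Good ⊆ C i ∧
        2 * ε * ((Vset i).card : ℝ) < (Good.card : ℝ) ∧
        ∀ x ∈ Good, ∀ j ∈ T₁.erase i,
          ((G.edgeDensity (Vset i) (Vset j) : ℝ) - ε) * ((C j).card : ℝ)
            ≤ (((C j).filter (G.Adj x)).card : ℝ) := by
      intro i hi
      have hiS : i ∈ S₁ := hsubT1 hi
      -- general size facts
      have hT1card : T₁.card ≤ N := by omega
      have hmt : m ≤ t - 1 := by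
        have : 1 ≤ T₁.card := Finset.card_pos.2 ⟨i, hi⟩
        omega
      have hpm : (δ - ε) ^ (t - 1) ≤ (δ - ε) ^ m :=
        pow_le_pow_of_le_one hde0.le hde1 hmt
      set Good : Finset α := (C i).filter (fun x => ∀ j ∈ T₁.erase i,
        ((G.edgeDensity (Vset i) (Vset j) : ℝ) - ε) * ((C j).card : ℝ)
          ≤ (((C j).filter (G.Adj x)).card : ℝ)) with hGdef
      refine ⟨Good, Finset.filter_subset _ _, ?_, ?_⟩
      swap
      · intro x hx
        exact (Finset.mem_filter.1 hx).2
      -- cardinality bound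
      have hcover : (C i).card ≤ Good.card + ∑ j ∈ T₁.erase i,
          ((C i).filter (fun x =>
            (((C j).filter (G.Adj x)).card : ℝ) <
              ((G.edgeDensity (Vset i) (Vset j) : ℝ) - ε) * ((C j).card : ℝ))).card := by
        have hsd : C i \ Good ⊆ (T₁.erase i).biUnion (fun j => (C i).filter (fun x =>
            (((C j).filter (G.Adj x)).card : ℝ) <
              ((G.edgeDensity (Vset i) (Vset j) : ℝ) - ε) * ((C j).card : ℝ))) := by
          intro x hx
          rw [Finset.mem_sdiff] at hx
          obtain ⟨hx1, hx2⟩ := hx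
          rw [hGdef, Finset.mem_filter] at hx2
          push_neg at hx2
          obtain ⟨j, hj, hjlt⟩ := hx2 hx1
          exact Finset.mem_biUnion.2 ⟨j, hj, Finset.mem_filter.2 ⟨hx1, hjlt⟩⟩
        calc (C i).card = Good.card + (C i \ Good).card := by
              rw [add_comm, Finset.card_sdiff_add_card_eq_card (Finset.filter_subset _ _)]
          _ ≤ Good.card + _ := by
              gcongr
              exact (Finset.card_le_card hsd).trans (Finset.card_biUnion_le)
      -- each bad set is small
      have hbad : ∀ j ∈ T₁.erase i,
          (((C i).filter (fun x =>
            (((C j).filter (G.Adj x)).card : ℝ) <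
              ((G.edgeDensity (Vset i) (Vset j) : ℝ) - ε) * ((C j).card : ℝ))).card : ℝ)
            < ε * ((Vset i).card : ℝ) := by
        intro j hj
        have hjT : j ∈ T₁ := Finset.mem_of_mem_erase hj
        have hij : i ≠ j := (Finset.ne_of_mem_erase hj).symm
        have hCj : ε * ((Vset j).card : ℝ) ≤ ((C j).card : ℝ) := by
          refine le_trans ?_ (hCcard j hjT)
          have : ε ≤ (δ - ε) ^ m := by nlinarith
          have hv : (0:ℝ) ≤ ((Vset j).card : ℝ) := by positivity
          nlinarith
        refine bad_small G hε0 (hne i) (hreg i hiS j (hsubT1 hjT) hij).1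
          (hCsub j hjT) hCj _ ((Finset.filter_subset _ _).trans (hCsub i hi)) ?_
        intro x hx
        exact (Finset.mem_filter.1 hx).2
      -- combine
      have hvi1 : (1:ℝ) ≤ ((Vset i).card : ℝ) := by
        exact_mod_cast Finset.card_pos.2 (hne i)
      have herased : ((T₁.erase i).card : ℝ) ≤ (t : ℝ) - 1 := by
        have h1 : (T₁.erase i).card = T₁.card - 1 := Finset.card_erase_of_mem hi
        have h2 : T₁.card ≤ t := by omega
        have h3 : 1 ≤ T₁.card := Finset.card_pos.2 ⟨i, hi⟩
        have : ((T₁.erase i).card : ℕ) ≤ t - 1 := by omega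
        calc ((T₁.erase i).card : ℝ) ≤ ((t - 1 : ℕ) : ℝ) := by exact_mod_cast this
          _ ≤ (t : ℝ) - 1 := by
            have : ((t - 1 : ℕ) : ℝ) = (t : ℝ) - 1 := by
              have : (1:ℕ) ≤ t := by omega
              push_cast [Nat.cast_sub this]
              ring
            linarith [this.le]
      have hsumbad : (∑ j ∈ T₁.erase i,
          ((C i).filter (fun x =>
            (((C j).filter (G.Adj x)).card : ℝ) <
              ((G.edgeDensity (Vset i) (Vset j) : ℝ) - ε) * ((C j).card : ℝ))).card : ℝ)
            ≤ ((t : ℝ) - 1) * (ε * ((Vset i).card : ℝ)) := by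
        push_cast
        calc ∑ j ∈ T₁.erase i, (((C i).filter _).card : ℝ)
            ≤ ∑ _j ∈ T₁.erase i, ε * ((Vset i).card : ℝ) :=
              Finset.sum_le_sum (fun j hj => (hbad j hj).le)
          _ = ((T₁.erase i).card : ℝ) * (ε * ((Vset i).card : ℝ)) := by
              rw [Finset.sum_const, nsmul_eq_mul]
          _ ≤ ((t : ℝ) - 1) * (ε * ((Vset i).card : ℝ)) := by
              have : (0:ℝ) ≤ ε * ((Vset i).card : ℝ) := by positivity
              nlinarith
      have hCi : (δ - ε) ^ m * ((Vset i).card : ℝ) ≤ ((C i).card : ℝ) := hCcard i hi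
      have hcoverR : ((C i).card : ℝ) ≤ (Good.card : ℝ) + ∑ j ∈ T₁.erase i,
          (((C i).filter (fun x =>
            (((C j).filter (G.Adj x)).card : ℝ) <
              ((G.edgeDensity (Vset i) (Vset j) : ℝ) - ε) * ((C j).card : ℝ))).card : ℝ) := by
        push_cast
        exact_mod_cast hcover
      nlinarith [mul_le_mul_of_nonneg_right hpm (by positivity : (0:ℝ) ≤ ((Vset i).card : ℝ)),
        mul_lt_mul_of_pos_right hpow (by linarith : (0:ℝ) < ((Vset i).card : ℝ))]
    by_cases hTT : (T₁ \ T₂).Nonempty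
    · -- vertex step
      obtain ⟨i, hiTT⟩ := hTT
      have hi : i ∈ T₁ := (Finset.mem_sdiff.1 hiTT).1
      have hiT2 : i ∉ T₂ := (Finset.mem_sdiff.1 hiTT).2
      obtain ⟨Good, hGsub, hGcard, hGprop⟩ := key i hi
      have hvpos : (0:ℝ) < ((Vset i).card : ℝ) := by
        exact_mod_cast Finset.card_pos.2 (hne i)
      have hGne : Good.Nonempty := by
        have h0 : (0:ℝ) < (Good.card : ℝ) := lt_trans (by positivity) hGcard
        exact Finset.card_pos.1 (by exact_mod_cast h0)
      obtain ⟨x, hx⟩ := hGne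
      have hN1 : 1 ≤ N := by
        have h1 : 1 ≤ T₁.card := Finset.card_pos.2 ⟨i, hi⟩
        omega
      have hT1c : 1 ≤ T₁.card := Finset.card_pos.2 ⟨i, hi⟩
      have hcard' : (T₁.erase i).card + T₂.card = N - 1 := by
        rw [Finset.card_erase_of_mem hi]
        omega
      have hsub21' : T₂ ⊆ T₁.erase i := Finset.subset_erase.2 ⟨hsub21, hiT2⟩
      obtain ⟨K', hK'c, hK'mem⟩ := IH (N-1) (by omega) (T₁.erase i) T₂ hcard' hsub21'
        ((Finset.erase_subset _ _).trans hsubT1) hsubT2 (m+1) (by omega)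
        (fun j => (C j).filter (G.Adj x))
        (fun j hj => (Finset.filter_subset _ _).trans (hCsub j (Finset.mem_of_mem_erase hj)))
        (by
          intro j hj
          have hjT : j ∈ T₁ := Finset.mem_of_mem_erase hj
          have hij : i ≠ j := (Finset.ne_of_mem_erase hj).symm
          have hd := (hreg i (hsubT1 hi) j (hsubT1 hjT) hij).2
          have h1 := hGprop x hx j hj
          have h2 := hCcard j hjT
          have hCjnn : (0:ℝ) ≤ ((C j).card : ℝ) := by positivity
          have hVjnn : (0:ℝ) ≤ ((Vset j).card : ℝ) := by positivity
          rw [pow_succ]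
          nlinarith [mul_le_mul_of_nonneg_right (show δ - ε ≤ (G.edgeDensity (Vset i) (Vset j) : ℝ) - ε by linarith) hCjnn,
            mul_le_mul_of_nonneg_left h2 hde0.le])
      refine ⟨insert x K', ?_, ?_⟩
      · have hadj : ∀ b ∈ K', G.Adj x b := by
          intro b hb
          obtain ⟨j, _hj, hbj⟩ := hK'mem b hb
          exact (Finset.mem_filter.1 hbj).2
        have h2 := hK'c.insert hadj
        have hNe : N - 1 + 1 = N := by omega
        rwa [hNe] at h2
      · intro w hw
        rcases Finset.mem_insert.1 hw with rfl | hw'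
        · exact ⟨i, hi, hGsub hx⟩
        · obtain ⟨j, hj, hbj⟩ := hK'mem w hw'
          exact ⟨j, Finset.mem_of_mem_erase hj, (Finset.mem_filter.1 hbj).1⟩
    · -- pair step
      have hT12 : T₁ = T₂ := by
        rw [Finset.not_nonempty_iff_eq_empty, Finset.sdiff_eq_empty_iff_subset] at hTT
        exact Finset.Subset.antisymm hTT hsub21
      obtain ⟨i, hi⟩ := hT1ne
      have hiT2 : i ∈ T₂ := hT12 ▸ hi
      have hiS2 : i ∈ S₂ := hsubT2 hiT2
      obtain ⟨Good, hGsub, hGcard, hGprop⟩ := key i hi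
      have hGgt : indepNum G < Good.card := by
        have h0 := hα i (hsubT1 hi)
        exact_mod_cast lt_trans h0 hGcard
      obtain ⟨u, hu, v, hv, huv⟩ := indep_bound G Good hGgt
      have hT1c : 1 ≤ T₂.card := Finset.card_pos.2 ⟨i, hiT2⟩
      have hNT : T₂.card + T₂.card = N := by rw [← hT12] at hN ⊢; omega
      have hN2 : 2 ≤ N := by omega
      have hcard' : (T₂.erase i).card + (T₂.erase i).card = N - 2 := by
        rw [Finset.card_erase_of_mem hiT2]
        omega
      obtain ⟨K', hK'c, hK'mem⟩ := IH (N-2) (by omega) (T₂.erase i) (T₂.erase i) hcard'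
        Finset.Subset.rfl ((Finset.erase_subset _ _).trans (hsub21.trans hsubT1))
        ((Finset.erase_subset _ _).trans hsubT2) (m+2) (by omega)
        (fun j => (C j).filter (fun y => G.Adj u y ∧ G.Adj v y))
        (fun j hj => (Finset.filter_subset _ _).trans
          (hCsub j (hsub21 (Finset.mem_of_mem_erase hj))))
        (by
          intro j hj
          have hjT2 : j ∈ T₂ := Finset.mem_of_mem_erase hj
          have hjT1 : j ∈ T₁ := hsub21 hjT2
          have hjerase1 : j ∈ T₁.erase i := by rw [hT12]; exact hj
          have hij : i ≠ j := (Finset.ne_of_mem_erase hj).symm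
          have hd := hdens i hiS2 j (hsubT2 hjT2) hij
          have hu' := hGprop u hu j hjerase1
          have hv' := hGprop v hv j hjerase1
          have hCj := hCcard j hjT1
          have hCjnn : (0:ℝ) ≤ ((C j).card : ℝ) := by positivity
          have hVjnn : (0:ℝ) ≤ ((Vset j).card : ℝ) := by positivity
          have hfil : (C j).filter (fun y => G.Adj u y ∧ G.Adj v y)
              = (C j).filter (G.Adj u) ∩ (C j).filter (G.Adj v) := by
            rw [← Finset.filter_and]
          have hcui := Finset.card_union_add_card_inter
            ((C j).filter (G.Adj u)) ((C j).filter (G.Adj v))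
          have hcun : ((C j).filter (G.Adj u) ∪ (C j).filter (G.Adj v)).card ≤ (C j).card :=
            Finset.card_le_card (Finset.union_subset (Finset.filter_subset _ _)
              (Finset.filter_subset _ _))
          have hintR : ((C j).filter (G.Adj u)).card + ((C j).filter (G.Adj v)).card
              - (C j).card ≤ (((C j).filter (G.Adj u) ∩ (C j).filter (G.Adj v)) ).card := by
            omega
          have hintR' : (((C j).filter (G.Adj u)).card : ℝ)
              + (((C j).filter (G.Adj v)).card : ℝ) - ((C j).card : ℝ)
              ≤ ((((C j).filter (G.Adj u) ∩ (C j).filter (G.Adj v))).card : ℝ) := by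
            have hcuiR : (((C j).filter (G.Adj u) ∪ (C j).filter (G.Adj v)).card : ℝ)
                + ((((C j).filter (G.Adj u) ∩ (C j).filter (G.Adj v))).card : ℝ)
                = (((C j).filter (G.Adj u)).card : ℝ) + (((C j).filter (G.Adj v)).card : ℝ) := by
              exact_mod_cast hcui
            have hcunR : (((C j).filter (G.Adj u) ∪ (C j).filter (G.Adj v)).card : ℝ)
                ≤ ((C j).card : ℝ) := by exact_mod_cast hcun
            linarith
          show (δ - ε) ^ (m + 2) * ((Vset j).card : ℝ)
              ≤ (((C j).filter (fun y => G.Adj u y ∧ G.Adj v y)).card : ℝ)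
          rw [hfil]
          have e1 : (δ - ε)^2 ≤ 2*(δ - ε) := by nlinarith
          have hpe : (δ - ε)^(m+2) * ((Vset j).card : ℝ)
              = (δ - ε)^2 * ((δ - ε)^m * ((Vset j).card : ℝ)) := by ring
          have s1 : (δ - ε)^(m+2) * ((Vset j).card : ℝ) ≤ (δ - ε)^2 * ((C j).card : ℝ) := by
            rw [hpe]
            exact mul_le_mul_of_nonneg_left hCj (sq_nonneg _)
          have s2 : (δ - ε)^2 * ((C j).card : ℝ) ≤ 2*(δ - ε) * ((C j).card : ℝ) :=
            mul_le_mul_of_nonneg_right e1 hCjnn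
          have s3 : 2*(δ - ε) * ((C j).card : ℝ)
              ≤ (2 * (G.edgeDensity (Vset i) (Vset j) : ℝ) - 2*ε - 1) * ((C j).card : ℝ) := by
            have : 2*(δ - ε) ≤ 2 * (G.edgeDensity (Vset i) (Vset j) : ℝ) - 2*ε - 1 := by
              linarith
            exact mul_le_mul_of_nonneg_right this hCjnn
          linarith
          )
      refine ⟨insert u (insert v K'), ?_, ?_⟩
      · have hadjv : ∀ b ∈ K', G.Adj v b := by
          intro b hb
          obtain ⟨j, _hj, hbj⟩ := hK'mem b hb
          exact (Finset.mem_filter.1 hbj).2.2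
        have h1 := hK'c.insert hadjv
        have hadju : ∀ b ∈ insert v K', G.Adj u b := by
          intro b hb
          rcases Finset.mem_insert.1 hb with rfl | hb'
          · exact huv
          · obtain ⟨j, _hj, hbj⟩ := hK'mem b hb'
            exact (Finset.mem_filter.1 hbj).2.1
        have h2 := h1.insert hadju
        have hNe : N - 2 + 1 + 1 = N := by omega
        rwa [hNe] at h2
      · intro w hw
        rcases Finset.mem_insert.1 hw with rfl | hw'
        · exact ⟨i, hi, hGsub hu⟩
        · rcases Finset.mem_insert.1 hw' with rfl | hw''
          · exact ⟨i, hi, hGsub hv⟩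
          · obtain ⟨j, hj, hbj⟩ := hK'mem w hw''
            exact ⟨j, hsub21 (Finset.mem_of_mem_erase hj), (Finset.mem_filter.1 hbj).1⟩

theorem clique_from_regular_pairs {α : Type} [Fintype α] [DecidableEq α]
    (t : ℕ) (ht : 3 ≤ t) (ε δ : ℝ)
    (hε0 : 0 < ε) (hε : ε < 1/2) (hδ0 : 0 < δ) (hδ1 : δ < 1)
    (hpow : ((t : ℝ) + 1) * ε < (δ - ε) ^ (t - 1))
    (G : SimpleGraph α) [DecidableRel G.Adj] (hG : G.CliqueFree t)
    (r : ℕ) (Vset : Fin r → Finset α)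
    (hdisj : ∀ i j : Fin r, i ≠ j → Disjoint (Vset i) (Vset j))
    (hne : ∀ i : Fin r, (Vset i).Nonempty)
    (S₁ S₂ : Finset (Fin r)) (hsub : S₂ ⊆ S₁)
    (hα : ∀ i ∈ S₁, (indepNum G : ℝ) < 2 * ε * ((Vset i).card : ℝ))
    (hreg : ∀ i ∈ S₁, ∀ j ∈ S₁, i ≠ j →
      G.IsUniform ε (Vset i) (Vset j) ∧ δ < (G.edgeDensity (Vset i) (Vset j) : ℝ))
    (hdens : ∀ i ∈ S₂, ∀ j ∈ S₂, i ≠ j →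
      1/2 + δ < (G.edgeDensity (Vset i) (Vset j) : ℝ)) :
    (∃ S : Finset α, G.IsNClique (S₁.card + S₂.card) S) ∧ S₁.card + S₂.card < t := by
  have hεδ : ε < δ := by
    by_contra hc
    push_neg at hc
    have h1 : (δ - ε) ^ (t-1) ≤ |δ - ε| ^ (t-1) := by
      calc (δ - ε) ^ (t-1) ≤ |(δ - ε) ^ (t-1)| := le_abs_self _
        _ = |δ - ε| ^ (t-1) := abs_pow _ _
    have h2 : |δ - ε| = ε - δ := by rw [abs_of_nonpos (by linarith : δ - ε ≤ 0)]; ring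
    have h3 : (ε - δ) ^ (t-1) ≤ ε ^ (t-1) := pow_le_pow_left₀ (by linarith) (by linarith) _
    have h4 : ε ^ (t-1) ≤ ε := pow_le_of_le_one hε0.le (by linarith) (by omega)
    have ht4 : (4:ℝ) ≤ (t:ℝ) + 1 := by exact_mod_cast Nat.succ_le_succ ht
    rw [h2] at h1
    nlinarith
  have hcore := core t ht ε δ hε0 hεδ hδ1 hpow G r Vset hne S₁ S₂ hα hreg hdens
  by_cases hk : S₁.card + S₂.card ≤ t
  · obtain ⟨K, hK, -⟩ := hcore (S₁.card + S₂.card) S₁ S₂ rfl hsub (subset_refl _)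
      (subset_refl _) 0 (by omega) Vset (fun i _ => subset_refl _)
      (fun i _ => by simp)
    have hlt : S₁.card + S₂.card < t := by
      rcases lt_or_eq_of_le hk with h | h
      · exact h
      · exact absurd (h ▸ hK) (hG K)
    exact ⟨⟨K, hK⟩, hlt⟩
  · exfalso
    push_neg at hk
    by_cases hs1 : t ≤ S₁.card
    · obtain ⟨S₁', hsub', hcard'⟩ := Finset.exists_subset_card_eq hs1
      obtain ⟨K, hK, -⟩ := hcore t S₁' ∅ (by simp [hcard']) (Finset.empty_subset _) hsub'
        (Finset.empty_subset _) 0 (by omega) Vset (fun i _ => subset_refl _) (fun i _ => by simp)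
      exact hG K hK
    · push_neg at hs1
      have h2 : t - S₁.card ≤ S₂.card := by omega
      obtain ⟨S₂', hsub', hcard'⟩ := Finset.exists_subset_card_eq h2
      obtain ⟨K, hK, -⟩ := hcore t S₁ S₂' (by rw [hcard']; omega) (hsub'.trans hsub)
        (subset_refl _) (hsub'.trans (subset_refl S₂)) 0 (by omega) Vset
        (fun i _ => subset_refl _) (fun i _ => by simp)
      exact hG K hK
end

section
/- Let R be a weighted graph on n ≥ 2 vertices containing two distinct vertices v₁, v₂ with edge weight w(v₁,v₂) = 0 and w(v₁)+w(v₂) > 0. For i ∈ {1,2}, let R'_i be the weighted graph on n−1 vertices obtained from R by deleting v_{3−i} and increasing the vertex weight of v_i to w(v₁)+w(v₂) (all other vertex weights and all edge weights among remaining vertices unchanged). Then, with α_i = w(v_i)/(w(v₁)+w(v₂)), one has α₁·d_{K_s}(R'_1) + α₂·d_{K_s}(R'_2) = d_{K_s}(R) for every integer s ≥ 1; moreover, if R is 𝒦_t-free then both R'_1 and R'_2 are 𝒦_t-free, and hence max{d_{K_s}(R'_1), d_{K_s}(R'_2)} ≥ d_{K_s}(R). -/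
open Filter

/-- Modified vertex-weight function: zero at `b`, `W` at `a`, unchanged elsewhere. -/
def modw {V : Type} [DecidableEq V] (vw : V → ℝ) (a b : V) (W : ℝ) : V → ℝ :=
  fun x => if x = b then 0 else if x = a then W else vw x

lemma edgeProd_zero {V : Type} [Fintype V] (R : WeightedGraph V) (v₁ v₂ : V)
    (hzero : R.ew v₁ v₂ = 0) {m : ℕ} (σ : Fin m → V) {i j : Fin m} (hij : i ≠ j)
    (hi : σ i = v₁ ∨ σ i = v₂) (hj : σ j = v₁ ∨ σ j = v₂) :
    ∏ p ∈ Finset.univ.filter (fun p : Fin m × Fin m => p.1 < p.2),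
      R.ew (σ p.1) (σ p.2) = 0 := by
  have hew : R.ew (σ i) (σ j) = 0 := by
    rcases hi with h1 | h1 <;> rcases hj with h2 | h2 <;> rw [h1, h2]
    · exact R.ew_self v₁
    · exact hzero
    · rw [R.ew_symm]; exact hzero
    · exact R.ew_self v₂
  rcases hij.lt_or_gt with h | h
  · exact Finset.prod_eq_zero (i := (i, j)) (by simp [h]) hew
  · exact Finset.prod_eq_zero (i := (j, i)) (by simp [h])
      (by show R.ew (σ j) (σ i) = 0; rw [R.ew_symm (σ j) (σ i)]; exact hew)

lemma sum_fun_subtype {V : Type} [Fintype V] [DecidableEq V] (w : V) (m : ℕ)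
    (F : (Fin m → V) → ℝ) (hF : ∀ σ : Fin m → V, (∃ i, σ i = w) → F σ = 0) :
    ∑ τ : Fin m → {x : V // x ≠ w}, F (fun i => (τ i : V)) = ∑ σ : Fin m → V, F σ := by
  classical
  let e : (Fin m → {x : V // x ≠ w}) ↪ (Fin m → V) :=
    ⟨fun τ i => (τ i : V), by
      intro a b hab
      funext i
      exact Subtype.ext (congrFun hab i)⟩
  rw [show (∑ τ : Fin m → {x : V // x ≠ w}, F (fun i => (τ i : V)))
      = ∑ σ ∈ Finset.univ.map e, F σ from (Finset.sum_map _ e F).symm]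
  apply Finset.sum_subset (Finset.subset_univ _)
  intro σ _ hσ
  apply hF
  by_contra hc
  push_neg at hc
  exact hσ (Finset.mem_map.mpr ⟨fun i => ⟨σ i, hc i⟩, Finset.mem_univ _, rfl⟩)

lemma density_del {V : Type} [Fintype V] [DecidableEq V] (R : WeightedGraph V)
    (w : V) (u : V → ℝ) (hu : u w = 0)
    (R' : WeightedGraph {x : V // x ≠ w})
    (hv : ∀ x : {x : V // x ≠ w}, R'.vw x = u x)
    (he : ∀ x y : {x : V // x ≠ w}, R'.ew x y = R.ew x y)
    (m : ℕ) :
    R'.density m = ∑ σ : Fin m → V, (∏ i, u (σ i)) *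
      ∏ p ∈ Finset.univ.filter (fun p : Fin m × Fin m => p.1 < p.2),
        R.ew (σ p.1) (σ p.2) := by
  rw [WeightedGraph.density,
    ← sum_fun_subtype w m (fun σ => (∏ i, u (σ i)) *
      ∏ p ∈ Finset.univ.filter (fun p : Fin m × Fin m => p.1 < p.2),
        R.ew (σ p.1) (σ p.2))
      (by
        rintro σ ⟨i, hi⟩
        have h0 : ∏ i, u (σ i) = 0 :=
          Finset.prod_eq_zero (Finset.mem_univ i) (by rw [hi, hu])
        rw [h0, zero_mul])]
  apply Finset.sum_congr rfl
  intro τ _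
  congr 1
  · exact Finset.prod_congr rfl fun i _ => hv (τ i)
  · exact Finset.prod_congr rfl fun p _ => he (τ p.1) (τ p.2)

lemma per_sigma {V : Type} [Fintype V] [DecidableEq V] (R : WeightedGraph V)
    (v₁ v₂ : V) (hne : v₁ ≠ v₂) (hzero : R.ew v₁ v₂ = 0)
    (hpos : 0 < R.vw v₁ + R.vw v₂) (m : ℕ) (σ : Fin m → V) :
    R.vw v₁ / (R.vw v₁ + R.vw v₂) *
        ((∏ i, modw R.vw v₁ v₂ (R.vw v₁ + R.vw v₂) (σ i)) *
          ∏ p ∈ Finset.univ.filter (fun p : Fin m × Fin m => p.1 < p.2),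
            R.ew (σ p.1) (σ p.2))
      + R.vw v₂ / (R.vw v₁ + R.vw v₂) *
        ((∏ i, modw R.vw v₂ v₁ (R.vw v₁ + R.vw v₂) (σ i)) *
          ∏ p ∈ Finset.univ.filter (fun p : Fin m × Fin m => p.1 < p.2),
            R.ew (σ p.1) (σ p.2))
      = (∏ i, R.vw (σ i)) *
          ∏ p ∈ Finset.univ.filter (fun p : Fin m × Fin m => p.1 < p.2),
            R.ew (σ p.1) (σ p.2) := by
  set W := R.vw v₁ + R.vw v₂ with hW
  set E := ∏ p ∈ Finset.univ.filter (fun p : Fin m × Fin m => p.1 < p.2),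
    R.ew (σ p.1) (σ p.2) with hE
  have hWne : W ≠ 0 := ne_of_gt hpos
  by_cases hE0 : E = 0
  · rw [hE0]; ring
  have huniq : ∀ i j : Fin m, (σ i = v₁ ∨ σ i = v₂) → (σ j = v₁ ∨ σ j = v₂) → i = j := by
    intro i j hi hj
    by_contra h
    exact hE0 (edgeProd_zero R v₁ v₂ hzero σ h hi hj)
  by_cases h1 : ∃ i, σ i = v₁ <;> by_cases h2 : ∃ i, σ i = v₂
  · obtain ⟨i, hi⟩ := h1
    obtain ⟨j, hj⟩ := h2
    have hij := huniq i j (Or.inl hi) (Or.inr hj)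
    subst hij
    exact absurd (hi.symm.trans hj) hne
  · push_neg at h2
    obtain ⟨i₀, hi₀⟩ := h1
    have e1 : ∏ i, modw R.vw v₁ v₂ W (σ i)
        = W * ∏ i ∈ Finset.univ.erase i₀, R.vw (σ i) := by
      rw [← Finset.mul_prod_erase Finset.univ _ (Finset.mem_univ i₀)]
      congr 1
      · simp [modw, hi₀, hne]
      · apply Finset.prod_congr rfl
        intro i hi
        have hiv1 : σ i ≠ v₁ := fun h =>
          (Finset.mem_erase.mp hi).1 (huniq i i₀ (Or.inl h) (Or.inl hi₀))
        simp [modw, h2 i, hiv1]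
    have e2 : ∏ i, modw R.vw v₂ v₁ W (σ i) = 0 :=
      Finset.prod_eq_zero (Finset.mem_univ i₀) (by simp [modw, hi₀])
    have e3 : ∏ i, R.vw (σ i)
        = R.vw v₁ * ∏ i ∈ Finset.univ.erase i₀, R.vw (σ i) := by
      rw [← Finset.mul_prod_erase Finset.univ _ (Finset.mem_univ i₀), hi₀]
    rw [e1, e2, e3]
    field_simp
    ring
  · push_neg at h1
    obtain ⟨i₀, hi₀⟩ := h2
    have e1 : ∏ i, modw R.vw v₂ v₁ W (σ i)
        = W * ∏ i ∈ Finset.univ.erase i₀, R.vw (σ i) := by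
      rw [← Finset.mul_prod_erase Finset.univ _ (Finset.mem_univ i₀)]
      congr 1
      · simp [modw, hi₀, hne.symm]
      · apply Finset.prod_congr rfl
        intro i hi
        have hiv2 : σ i ≠ v₂ := fun h =>
          (Finset.mem_erase.mp hi).1 (huniq i i₀ (Or.inr h) (Or.inr hi₀))
        simp [modw, h1 i, hiv2]
    have e2 : ∏ i, modw R.vw v₁ v₂ W (σ i) = 0 :=
      Finset.prod_eq_zero (Finset.mem_univ i₀) (by simp [modw, hi₀])
    have e3 : ∏ i, R.vw (σ i)
        = R.vw v₂ * ∏ i ∈ Finset.univ.erase i₀, R.vw (σ i) := by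
      rw [← Finset.mul_prod_erase Finset.univ _ (Finset.mem_univ i₀), hi₀]
    rw [e1, e2, e3]
    field_simp
    ring
  · push_neg at h1
    push_neg at h2
    have e1 : ∀ i, modw R.vw v₁ v₂ W (σ i) = R.vw (σ i) := fun i => by
      simp [modw, h1 i, h2 i]
    have e2 : ∀ i, modw R.vw v₂ v₁ W (σ i) = R.vw (σ i) := fun i => by
      simp [modw, h1 i, h2 i]
    simp only [e1, e2]
    have hs : R.vw v₁ / W + R.vw v₂ / W = 1 := by
      rw [← add_div, ← hW, div_self hWne]
    rw [← add_mul, hs, one_mul]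

lemma ktfree_del {V : Type} [Fintype V] [DecidableEq V] (R : WeightedGraph V) (w : V)
    (R' : WeightedGraph {x : V // x ≠ w})
    (he : ∀ x y : {x : V // x ≠ w}, R'.ew x y = R.ew x y)
    (t : ℕ) (h : R.KtFree t) : R'.KtFree t := by
  rintro ⟨S₁, S₂, hsub, hcard, hsum, hc1, hc2⟩
  have clique_transfer : ∀ (α : ℝ) (S : Finset {x : V // x ≠ w}),
      (R'.gtGraph α).IsClique (S : Set {x : V // x ≠ w}) →
      (R.gtGraph α).IsClique ((S.map (Function.Embedding.subtype _) : Finset V) : Set V) := by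
    intro α S hS a ha b hb hab
    rw [Finset.coe_map] at ha hb
    obtain ⟨x, hx, rfl⟩ := ha
    obtain ⟨y, hy, rfl⟩ := hb
    have hxy : x ≠ y := fun h => hab (by rw [h])
    obtain ⟨-, hlt⟩ := hS hx hy hxy
    exact ⟨hab, he x y ▸ hlt⟩
  exact h ⟨S₁.map (Function.Embedding.subtype _), S₂.map (Function.Embedding.subtype _),
    Finset.map_subset_map.mpr hsub, by simpa using hcard, by simpa using hsum,
    clique_transfer 0 S₁ hc1, clique_transfer (1/2) S₂ hc2⟩

theorem symmetrization_zero_edge {V : Type} [Fintype V] [DecidableEq V]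
    (R : WeightedGraph V) (v₁ v₂ : V) (hne : v₁ ≠ v₂)
    (hzero : R.ew v₁ v₂ = 0) (hpos : 0 < R.vw v₁ + R.vw v₂)
    (R₁' : WeightedGraph {x : V // x ≠ v₂})
    (h₁v : ∀ x : {x : V // x ≠ v₂},
      R₁'.vw x = if (x : V) = v₁ then R.vw v₁ + R.vw v₂ else R.vw x)
    (h₁e : ∀ x y : {x : V // x ≠ v₂}, R₁'.ew x y = R.ew x y)
    (R₂' : WeightedGraph {x : V // x ≠ v₁})
    (h₂v : ∀ x : {x : V // x ≠ v₁},
      R₂'.vw x = if (x : V) = v₂ then R.vw v₁ + R.vw v₂ else R.vw x)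
    (h₂e : ∀ x y : {x : V // x ≠ v₁}, R₂'.ew x y = R.ew x y) :
    (∀ s : ℕ, 1 ≤ s →
      R.vw v₁ / (R.vw v₁ + R.vw v₂) * R₁'.density s
        + R.vw v₂ / (R.vw v₁ + R.vw v₂) * R₂'.density s = R.density s) ∧
    (∀ t : ℕ, R.KtFree t →
      R₁'.KtFree t ∧ R₂'.KtFree t ∧
      ∀ s : ℕ, 1 ≤ s → R.density s ≤ max (R₁'.density s) (R₂'.density s)) := by
  have hWne : R.vw v₁ + R.vw v₂ ≠ 0 := ne_of_gt hpos
  have key : ∀ s : ℕ,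
      R.vw v₁ / (R.vw v₁ + R.vw v₂) * R₁'.density s
        + R.vw v₂ / (R.vw v₁ + R.vw v₂) * R₂'.density s = R.density s := by
    intro s
    rw [density_del R v₂ (modw R.vw v₁ v₂ (R.vw v₁ + R.vw v₂)) (by simp [modw]) R₁'
        (fun x => by rw [h₁v x]; simp only [modw]; rw [if_neg x.2]) h₁e s,
      density_del R v₁ (modw R.vw v₂ v₁ (R.vw v₁ + R.vw v₂)) (by simp [modw]) R₂'
        (fun x => by rw [h₂v x]; simp only [modw]; rw [if_neg x.2]) h₂e s,
      WeightedGraph.density, Finset.mul_sum, Finset.mul_sum, ← Finset.sum_add_distrib]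
    exact Finset.sum_congr rfl fun σ _ => per_sigma R v₁ v₂ hne hzero hpos s σ
  refine ⟨fun s _ => key s, fun t hKt =>
    ⟨ktfree_del R v₂ R₁' h₁e t hKt, ktfree_del R v₁ R₂' h₂e t hKt, ?_⟩⟩
  intro s _
  rw [← key s]
  have hα₁ : 0 ≤ R.vw v₁ / (R.vw v₁ + R.vw v₂) := div_nonneg (R.vw_nonneg v₁) hpos.le
  have hα₂ : 0 ≤ R.vw v₂ / (R.vw v₁ + R.vw v₂) := div_nonneg (R.vw_nonneg v₂) hpos.le
  have hs : R.vw v₁ / (R.vw v₁ + R.vw v₂) + R.vw v₂ / (R.vw v₁ + R.vw v₂) = 1 := by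
    rw [← add_div, div_self hWne]
  calc R.vw v₁ / (R.vw v₁ + R.vw v₂) * R₁'.density s
        + R.vw v₂ / (R.vw v₁ + R.vw v₂) * R₂'.density s
      ≤ R.vw v₁ / (R.vw v₁ + R.vw v₂) * max (R₁'.density s) (R₂'.density s)
        + R.vw v₂ / (R.vw v₁ + R.vw v₂) * max (R₁'.density s) (R₂'.density s) :=
        add_le_add (mul_le_mul_of_nonneg_left (le_max_left _ _) hα₁)
          (mul_le_mul_of_nonneg_left (le_max_right _ _) hα₂)
    _ = max (R₁'.density s) (R₂'.density s) := by rw [← add_mul, hs, one_mul]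
end

section
/- Fix a positive integer m. There exist real constants c_r > 0 for 0 ≤ r ≤ ⌊m/2⌋ such that for all positive integers P,Q and all real numbers p,q, the identity (m!/2^{C(m,2)})·∑_{x+y=m} C(P,x)·C(Q,y)·p^x·q^y·2^{xy} = ∑_{r=0}^{⌊m/2⌋} c_r·N_{m,r}(p,P;q,Q) holds. (The left-hand side equals d_{K_m}(R(p,P;q,Q)) whenever p,q ∈ (0,1) with pP+qQ = 1.) -/
/-- `N_{m,r}(p,P;q,Q) = ∑_{x+y=m, x,y ≥ r} C(P,x) p^x C(Q,y) q^y · x!y!/((x−r)!(y−r)!)`. -/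
noncomputable def Nmr (m r P Q : ℕ) (p q : ℝ) : ℝ :=
  ∑ x ∈ Finset.Icc r (m - r),
    (P.choose x : ℝ) * p ^ x * (Q.choose (m - x) : ℝ) * q ^ (m - x) *
      ((x.factorial : ℝ) * ((m - x).factorial : ℝ) /
        (((x - r).factorial : ℝ) * ((m - x - r).factorial : ℝ)))

private lemma two_pow_ge (e : ℕ) : e + 2 ≤ 2 ^ (e + 1) := by
  induction e with
  | zero => norm_num
  | succ n ih => rw [pow_succ]; omega

private lemma key_nat (m s r : ℕ) (hr : r ≤ s) (hm : 2 * s + 2 ≤ m) :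
    (s + 1).choose r * (m - (s + 1)).choose r
      ≤ 2 ^ (m - (2 * s + 1)) * (s.choose r * (m - s).choose r) := by
  obtain ⟨a, rfl⟩ : ∃ a, s = r + a := ⟨s - r, by omega⟩
  obtain ⟨e, rfl⟩ : ∃ e, m = 2 * (r + a) + 2 + e := ⟨m - (2 * (r + a) + 2), by omega⟩
  rw [show 2 * (r + a) + 2 + e - ((r + a) + 1) = r + a + 1 + e from by omega,
      show 2 * (r + a) + 2 + e - (2 * (r + a) + 1) = e + 1 from by omega,
      show 2 * (r + a) + 2 + e - (r + a) = r + a + 2 + e from by omega]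
  have H1 : (r + a).choose r * (r + a + 1) = (r + a + 1).choose r * (a + 1) := by
    have h := Nat.choose_mul_succ_eq (r + a) r
    rwa [show r + a + 1 - r = a + 1 from by omega] at h
  have H2 : (r + a + 1 + e).choose r * (r + a + 2 + e) = (r + a + 2 + e).choose r * (a + 2 + e) := by
    have h := Nat.choose_mul_succ_eq (r + a + 1 + e) r
    rwa [show r + a + 1 + e + 1 - r = a + 2 + e from by omega,
         show r + a + 1 + e + 1 = r + a + 2 + e from by omega] at h
  have harith : (r + a + 1) * (a + 2 + e) ≤ 2 ^ (e + 1) * ((a + 1) * (r + a + 2 + e)) := by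
    have h1 : a + 2 + e ≤ (a + 1) * (e + 2) := by
      have : (a + 1) * (e + 2) = (a + 2 + e) + (a * e + a) := by ring
      omega
    have h2 : e + 2 ≤ 2 ^ (e + 1) := two_pow_ge e
    calc (r + a + 1) * (a + 2 + e) ≤ (r + a + 2 + e) * ((a + 1) * (e + 2)) :=
          Nat.mul_le_mul (by omega) h1
      _ = (e + 2) * ((a + 1) * (r + a + 2 + e)) := by ring
      _ ≤ 2 ^ (e + 1) * ((a + 1) * (r + a + 2 + e)) :=
          Nat.mul_le_mul_right _ h2
  have hpos : 0 < (a + 1) * (r + a + 2 + e) := by positivity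
  refine Nat.le_of_mul_le_mul_right ?_ hpos
  calc (r + a + 1).choose r * (r + a + 1 + e).choose r * ((a + 1) * (r + a + 2 + e))
      = ((r + a + 1).choose r * (a + 1)) * ((r + a + 1 + e).choose r * (r + a + 2 + e)) := by ring
    _ = ((r + a).choose r * (r + a + 1)) * ((r + a + 2 + e).choose r * (a + 2 + e)) := by
        rw [← H1, H2]
    _ = ((r + a).choose r * (r + a + 2 + e).choose r) * ((r + a + 1) * (a + 2 + e)) := by ring
    _ ≤ ((r + a).choose r * (r + a + 2 + e).choose r)
          * (2 ^ (e + 1) * ((a + 1) * (r + a + 2 + e))) :=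
        Nat.mul_le_mul_left _ harith
    _ = 2 ^ (e + 1) * ((r + a).choose r * (r + a + 2 + e).choose r) * ((a + 1) * (r + a + 2 + e)) := by
        ring

private lemma exists_dcoef (m : ℕ) :
    ∃ d : ℕ → ℝ, (∀ t, t ≤ m / 2 → 0 < d t) ∧
      ∀ t, t ≤ m / 2 →
        ∑ r ∈ Finset.range (t + 1), ((t.choose r : ℝ) * ((m - t).choose r : ℝ)) * d r
          = 2 ^ (t * (m - t)) := by
  suffices h : ∀ s, s ≤ m / 2 → ∃ d : ℕ → ℝ, (∀ t, t ≤ s → 0 < d t) ∧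
      ∀ t, t ≤ s →
        ∑ r ∈ Finset.range (t + 1), ((t.choose r : ℝ) * ((m - t).choose r : ℝ)) * d r
          = 2 ^ (t * (m - t)) by
    exact h (m / 2) le_rfl
  intro s
  induction s with
  | zero =>
      intro _
      refine ⟨fun _ => 1, fun t ht => one_pos, fun t ht => ?_⟩
      interval_cases t
      simp
  | succ s ih =>
      intro hs1
      obtain ⟨d, hpos, heq⟩ := ih (by omega)
      have hm : 2 * s + 2 ≤ m := by omega
      have hlt : ∑ r ∈ Finset.range (s + 1),
            (((s + 1).choose r : ℝ) * ((m - (s + 1)).choose r : ℝ)) * d r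
          < 2 ^ ((s + 1) * (m - (s + 1))) := by
        have hle : ∀ r ∈ Finset.range (s + 1),
            (((s + 1).choose r : ℝ) * ((m - (s + 1)).choose r : ℝ)) * d r
              ≤ 2 ^ (m - (2 * s + 1)) * (((s.choose r : ℝ) * ((m - s).choose r : ℝ)) * d r) := by
          intro r hr
          have hr' : r ≤ s := Nat.lt_succ_iff.mp (Finset.mem_range.mp hr)
          have hd := (hpos r hr').le
          have hkey := key_nat m s r hr' hm
          have hkey' : (((s + 1).choose r : ℝ) * ((m - (s + 1)).choose r : ℝ))
              ≤ 2 ^ (m - (2 * s + 1)) * ((s.choose r : ℝ) * ((m - s).choose r : ℝ)) := by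
            exact_mod_cast hkey
          nlinarith [hkey', hd]
        have hstrict : (((s + 1).choose 0 : ℝ) * ((m - (s + 1)).choose 0 : ℝ)) * d 0
            < 2 ^ (m - (2 * s + 1)) * (((s.choose 0 : ℝ) * ((m - s).choose 0 : ℝ)) * d 0) := by
          have h0 := hpos 0 (Nat.zero_le s)
          have h1 : (1 : ℝ) < 2 ^ (m - (2 * s + 1)) := by
            apply one_lt_pow₀ (by norm_num)
            omega
          simp only [Nat.choose_zero_right, Nat.cast_one, one_mul]
          nlinarith
        calc ∑ r ∈ Finset.range (s + 1),
              (((s + 1).choose r : ℝ) * ((m - (s + 1)).choose r : ℝ)) * d r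
            < ∑ r ∈ Finset.range (s + 1),
              2 ^ (m - (2 * s + 1)) * (((s.choose r : ℝ) * ((m - s).choose r : ℝ)) * d r) :=
              Finset.sum_lt_sum hle ⟨0, Finset.mem_range.mpr (Nat.succ_pos s), hstrict⟩
          _ = 2 ^ (m - (2 * s + 1)) * ∑ r ∈ Finset.range (s + 1),
                ((s.choose r : ℝ) * ((m - s).choose r : ℝ)) * d r := by
              rw [Finset.mul_sum]
          _ = 2 ^ (m - (2 * s + 1)) * 2 ^ (s * (m - s)) := by rw [heq s le_rfl]
          _ = 2 ^ ((s + 1) * (m - (s + 1))) := by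
              rw [← pow_add]
              congr 1
              obtain ⟨e, rfl⟩ : ∃ e, m = 2 * s + 2 + e := ⟨m - (2 * s + 2), by omega⟩
              rw [show 2 * s + 2 + e - (2 * s + 1) = e + 1 from by omega,
                  show 2 * s + 2 + e - s = s + 2 + e from by omega,
                  show 2 * s + 2 + e - (s + 1) = s + 1 + e from by omega]
              ring
      have hC : (0 : ℝ) < ((m - (s + 1)).choose (s + 1) : ℝ) := by
        exact_mod_cast Nat.choose_pos (by omega : s + 1 ≤ m - (s + 1))
      set v : ℝ := (2 ^ ((s + 1) * (m - (s + 1))) - ∑ r ∈ Finset.range (s + 1),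
          (((s + 1).choose r : ℝ) * ((m - (s + 1)).choose r : ℝ)) * d r)
          / ((m - (s + 1)).choose (s + 1) : ℝ) with hv
      refine ⟨Function.update d (s + 1) v, ?_, ?_⟩
      · intro t ht
        rcases eq_or_lt_of_le ht with h | h
        · rw [h, Function.update_self]
          exact div_pos (by linarith) hC
        · rw [Function.update_of_ne (by omega)]
          exact hpos t (by omega)
      · intro t ht
        rcases eq_or_lt_of_le ht with h | h
        · subst h
          rw [Finset.sum_range_succ]
          have hrest : ∀ r ∈ Finset.range (s + 1),
              (((s + 1).choose r : ℝ) * ((m - (s + 1)).choose r : ℝ))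
                  * Function.update d (s + 1) v r
                = (((s + 1).choose r : ℝ) * ((m - (s + 1)).choose r : ℝ)) * d r := by
            intro r hr
            rw [Function.update_of_ne (by have := Finset.mem_range.mp hr; omega)]
          rw [Finset.sum_congr rfl hrest, Function.update_self, Nat.choose_self]
          rw [hv, Nat.cast_one, one_mul, mul_div_cancel₀ _ (ne_of_gt hC)]
          ring
        · have ht' : t ≤ s := by omega
          have : ∀ r ∈ Finset.range (t + 1),
              ((t.choose r : ℝ) * ((m - t).choose r : ℝ)) * Function.update d (s + 1) v r
                = ((t.choose r : ℝ) * ((m - t).choose r : ℝ)) * d r := by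
            intro r hr
            rw [Function.update_of_ne (by have := Finset.mem_range.mp hr; omega)]
          rw [Finset.sum_congr rfl this, heq t ht']

private lemma sum_d (m : ℕ) (d : ℕ → ℝ)
    (heq : ∀ t, t ≤ m / 2 →
      ∑ r ∈ Finset.range (t + 1), ((t.choose r : ℝ) * ((m - t).choose r : ℝ)) * d r
        = 2 ^ (t * (m - t))) :
    ∀ x, x ≤ m →
      ∑ r ∈ Finset.range (m / 2 + 1), ((x.choose r : ℝ) * ((m - x).choose r : ℝ)) * d r
        = 2 ^ (x * (m - x)) := by
  have main : ∀ x, x ≤ m / 2 →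
      ∑ r ∈ Finset.range (m / 2 + 1), ((x.choose r : ℝ) * ((m - x).choose r : ℝ)) * d r
        = 2 ^ (x * (m - x)) := by
    intro x hx
    rw [← Finset.sum_subset (Finset.range_subset_range.mpr (by omega : x + 1 ≤ m / 2 + 1)) ?_]
    · exact heq x hx
    · intro r hr hnr
      have hxr : x < r := by
        have := Finset.mem_range.not.mp hnr; omega
      rw [Nat.choose_eq_zero_of_lt hxr]
      simp
  intro x hx
  rcases le_or_gt x (m / 2) with h | h
  · exact main x h
  · have h1 : m - x ≤ m / 2 := by omega
    have h2 := main (m - x) h1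
    rw [show m - (m - x) = x from by omega] at h2
    calc ∑ r ∈ Finset.range (m / 2 + 1), ((x.choose r : ℝ) * ((m - x).choose r : ℝ)) * d r
        = ∑ r ∈ Finset.range (m / 2 + 1), (((m - x).choose r : ℝ) * (x.choose r : ℝ)) * d r :=
          Finset.sum_congr rfl fun r _ => by ring
      _ = 2 ^ ((m - x) * x) := h2
      _ = 2 ^ (x * (m - x)) := by rw [Nat.mul_comm]

private lemma Nmr_eq (m r P Q : ℕ) (p q : ℝ) (hr : r ≤ m / 2) :
    Nmr m r P Q p q = ∑ x ∈ Finset.range (m + 1),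
      ((P.choose x : ℝ) * p ^ x * (Q.choose (m - x) : ℝ) * q ^ (m - x)) *
        ((r.factorial : ℝ) ^ 2 * ((x.choose r : ℝ) * ((m - x).choose r : ℝ))) := by
  unfold Nmr
  have hcong : ∀ x ∈ Finset.Icc r (m - r),
      (P.choose x : ℝ) * p ^ x * (Q.choose (m - x) : ℝ) * q ^ (m - x) *
        ((x.factorial : ℝ) * ((m - x).factorial : ℝ) /
          (((x - r).factorial : ℝ) * ((m - x - r).factorial : ℝ)))
      = ((P.choose x : ℝ) * p ^ x * (Q.choose (m - x) : ℝ) * q ^ (m - x)) *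
        ((r.factorial : ℝ) ^ 2 * ((x.choose r : ℝ) * ((m - x).choose r : ℝ))) := by
    intro x hx
    obtain ⟨hx1, hx2⟩ := Finset.mem_Icc.mp hx
    have hrm : r ≤ m := by omega
    have hrx2 : r ≤ m - x := by omega
    have e1 : (x.factorial : ℝ) = (x.choose r : ℝ) * (r.factorial : ℝ) * ((x - r).factorial : ℝ) := by
      exact_mod_cast (Nat.choose_mul_factorial_mul_factorial hx1).symm
    have e2 : ((m - x).factorial : ℝ)
        = ((m - x).choose r : ℝ) * (r.factorial : ℝ) * ((m - x - r).factorial : ℝ) := by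
      exact_mod_cast (Nat.choose_mul_factorial_mul_factorial hrx2).symm
    rw [e1, e2]
    have h1 : ((x - r).factorial : ℝ) ≠ 0 := Nat.cast_ne_zero.mpr (Nat.factorial_ne_zero _)
    have h2 : ((m - x - r).factorial : ℝ) ≠ 0 := Nat.cast_ne_zero.mpr (Nat.factorial_ne_zero _)
    field_simp
  rw [Finset.sum_congr rfl hcong]
  refine Finset.sum_subset ?_ ?_
  · intro x hx
    obtain ⟨hx1, hx2⟩ := Finset.mem_Icc.mp hx
    exact Finset.mem_range.mpr (by omega)
  · intro x hx hnx
    have hx' : x ≤ m := by have := Finset.mem_range.mp hx; omega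
    have hn := Finset.mem_Icc.not.mp hnx
    by_cases hxr : x < r
    · rw [Nat.choose_eq_zero_of_lt hxr]; simp
    · have : m - x < r := by omega
      rw [Nat.choose_eq_zero_of_lt this]; simp

theorem density_eq_positive_combination_Nmr (m : ℕ) (hm : 0 < m) :
    ∃ c : ℕ → ℝ, (∀ r : ℕ, r ≤ m / 2 → 0 < c r) ∧
      ∀ (P Q : ℕ), 0 < P → 0 < Q → ∀ p q : ℝ,
        (m.factorial : ℝ) / 2 ^ m.choose 2 *
            ∑ x ∈ Finset.range (m + 1),
              (P.choose x : ℝ) * (Q.choose (m - x) : ℝ) * p ^ x * q ^ (m - x)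
                * 2 ^ (x * (m - x))
          = ∑ r ∈ Finset.range (m / 2 + 1), c r * Nmr m r P Q p q := by
  obtain ⟨d, hdpos, hdeq⟩ := exists_dcoef m
  set K : ℝ := (m.factorial : ℝ) / 2 ^ m.choose 2 with hK
  have hKpos : 0 < K := by
    apply div_pos
    · exact_mod_cast Nat.factorial_pos m
    · positivity
  refine ⟨fun r => K * d r / (r.factorial : ℝ) ^ 2, ?_, ?_⟩
  · intro r hr
    exact div_pos (mul_pos hKpos (hdpos r hr)) (by positivity)
  · intro P Q hP hQ p q
    have step1 : ∑ r ∈ Finset.range (m / 2 + 1),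
          (K * d r / (r.factorial : ℝ) ^ 2) * Nmr m r P Q p q
        = ∑ x ∈ Finset.range (m + 1), ∑ r ∈ Finset.range (m / 2 + 1),
            (K * d r / (r.factorial : ℝ) ^ 2) *
              (((P.choose x : ℝ) * p ^ x * (Q.choose (m - x) : ℝ) * q ^ (m - x)) *
                ((r.factorial : ℝ) ^ 2 * ((x.choose r : ℝ) * ((m - x).choose r : ℝ)))) := by
      rw [Finset.sum_comm]
      refine Finset.sum_congr rfl fun r hr => ?_
      rw [Nmr_eq m r P Q p q (Nat.lt_succ_iff.mp (Finset.mem_range.mp hr)), Finset.mul_sum]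
    rw [step1, Finset.mul_sum]
    refine Finset.sum_congr rfl fun x hx => ?_
    have hxm : x ≤ m := Nat.lt_succ_iff.mp (Finset.mem_range.mp hx)
    have hs := sum_d m d hdeq x hxm
    calc K * ((P.choose x : ℝ) * (Q.choose (m - x) : ℝ) * p ^ x * q ^ (m - x) * 2 ^ (x * (m - x)))
        = (2 : ℝ) ^ (x * (m - x)) *
            (K * ((P.choose x : ℝ) * p ^ x * (Q.choose (m - x) : ℝ) * q ^ (m - x))) := by ring
      _ = (∑ r ∈ Finset.range (m / 2 + 1), ((x.choose r : ℝ) * ((m - x).choose r : ℝ)) * d r) *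
            (K * ((P.choose x : ℝ) * p ^ x * (Q.choose (m - x) : ℝ) * q ^ (m - x))) := by
          rw [hs]
      _ = ∑ r ∈ Finset.range (m / 2 + 1),
            (((x.choose r : ℝ) * ((m - x).choose r : ℝ)) * d r) *
              (K * ((P.choose x : ℝ) * p ^ x * (Q.choose (m - x) : ℝ) * q ^ (m - x))) := by
          rw [Finset.sum_mul]
      _ = ∑ r ∈ Finset.range (m / 2 + 1),
            (K * d r / (r.factorial : ℝ) ^ 2) *
              (((P.choose x : ℝ) * p ^ x * (Q.choose (m - x) : ℝ) * q ^ (m - x)) *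
                ((r.factorial : ℝ) ^ 2 * ((x.choose r : ℝ) * ((m - x).choose r : ℝ)))) := by
          refine Finset.sum_congr rfl fun r _ => ?_
          have hfac : ((r.factorial : ℝ)) ^ 2 ≠ 0 :=
            pow_ne_zero _ (Nat.cast_ne_zero.mpr (Nat.factorial_ne_zero _))
          field_simp
end

section
/- Let P,Q be positive integers with P ≥ Q+2 and let p,q ∈ (0,1) be real numbers with Pp + Qq = 1 and (P−1)p ≤ Qq. Set p' = Pp/(P−1) and q' = Qq/(Q+1). Then: (1) for every integer r with 0 < r ≤ Q, (1 − r/P)(1 − r/Q) < (1 − r/(P−1))(1 − r/(Q+1)); (2) p ≤ min{p',q'} and max{p',q'} < q; (3) for every integer r with 0 < r ≤ Q, (P−r)p + (Q−r)q < (P−1−r)p' + (Q+1−r)q'. -/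
theorem pq_inequalities (P Q : ℕ) (hQ : 0 < Q) (hPQ : Q + 2 ≤ P)
    (p q : ℝ) (hp : p ∈ Set.Ioo (0:ℝ) 1) (hq : q ∈ Set.Ioo (0:ℝ) 1)
    (hsum : (P : ℝ) * p + (Q : ℝ) * q = 1)
    (hle : ((P : ℝ) - 1) * p ≤ (Q : ℝ) * q) :
    (∀ r : ℕ, 0 < r → r ≤ Q →
      (1 - (r : ℝ) / P) * (1 - (r : ℝ) / Q)
        < (1 - (r : ℝ) / ((P : ℝ) - 1)) * (1 - (r : ℝ) / ((Q : ℝ) + 1))) ∧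
    (p ≤ min ((P : ℝ) * p / ((P : ℝ) - 1)) ((Q : ℝ) * q / ((Q : ℝ) + 1)) ∧
      max ((P : ℝ) * p / ((P : ℝ) - 1)) ((Q : ℝ) * q / ((Q : ℝ) + 1)) < q) ∧
    (∀ r : ℕ, 0 < r → r ≤ Q →
      ((P : ℝ) - r) * p + ((Q : ℝ) - r) * q
        < ((P : ℝ) - 1 - r) * ((P : ℝ) * p / ((P : ℝ) - 1))
          + ((Q : ℝ) + 1 - r) * ((Q : ℝ) * q / ((Q : ℝ) + 1))) := by
  obtain ⟨hp0, hp1⟩ := hp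
  obtain ⟨hq0, hq1⟩ := hq
  have hQr : (0:ℝ) < Q := by exact_mod_cast hQ
  have hPQr : (Q:ℝ) + 2 ≤ P := by exact_mod_cast hPQ
  have hP1 : (0:ℝ) < (P:ℝ) - 1 := by linarith
  have hPpos : (0:ℝ) < P := by linarith
  have hQ1 : (0:ℝ) < (Q:ℝ) + 1 := by linarith
  -- p < q
  have hpq : p < q := by
    have h1 : ((P:ℝ) - 1) * p ≤ (Q:ℝ) * q := hle
    nlinarith
  -- (Q+1) p < (P-1) q
  have hkey : ((Q:ℝ) + 1) * p < ((P:ℝ) - 1) * q := by nlinarith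
  refine ⟨?_, ⟨?_, ?_⟩, ?_⟩
  · intro r hr hrQ
    have hr0 : (0:ℝ) < r := by exact_mod_cast hr
    have hrQ' : (r:ℝ) ≤ Q := by exact_mod_cast hrQ
    rw [show (1 - (r : ℝ) / P) * (1 - (r : ℝ) / Q) =
        ((P - r) * (Q - r)) / (P * Q) by field_simp,
      show (1 - (r : ℝ) / ((P:ℝ) - 1)) * (1 - (r : ℝ) / ((Q:ℝ) + 1)) =
        (((P:ℝ) - 1 - r) * ((Q:ℝ) + 1 - r)) / (((P:ℝ) - 1) * ((Q:ℝ) + 1)) by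
        field_simp]
    rw [div_lt_div_iff₀ (by positivity) (by positivity)]
    nlinarith [mul_pos hr0 (show (0:ℝ) < ((P:ℝ) - Q - 1) * (P + Q - r) by nlinarith)]
  · refine le_min ?_ ?_
    · rw [le_div_iff₀ hP1]; nlinarith
    · rw [le_div_iff₀ hQ1]; nlinarith
  · refine max_lt ?_ ?_
    · rw [div_lt_iff₀ hP1]; nlinarith
    · rw [div_lt_iff₀ hQ1]; nlinarith
  · intro r hr hrQ
    have hr0 : (0:ℝ) < r := by exact_mod_cast hr
    have e1 : ((P : ℝ) - 1 - r) * ((P : ℝ) * p / ((P : ℝ) - 1))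
        = (P:ℝ) * p - r * ((P:ℝ) * p / ((P:ℝ) - 1)) := by
      field_simp
    have e2 : ((Q : ℝ) + 1 - r) * ((Q : ℝ) * q / ((Q : ℝ) + 1))
        = (Q:ℝ) * q - r * ((Q:ℝ) * q / ((Q:ℝ) + 1)) := by
      field_simp
    rw [e1, e2]
    have hsum' : ((P:ℝ) - r) * p + ((Q:ℝ) - r) * q = (P:ℝ)*p + (Q:ℝ)*q - r*(p+q) := by ring
    rw [hsum']
    have : (P:ℝ) * p / ((P:ℝ) - 1) + (Q:ℝ) * q / ((Q:ℝ) + 1) < p + q := by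
      rw [div_add_div _ _ (ne_of_gt hP1) (ne_of_gt hQ1), div_lt_iff₀ (by positivity)]
      nlinarith
    linarith [mul_lt_mul_of_pos_left this hr0]
end

section
/- Fix an integer s ≥ 3 and let t = s+2. If R is a 𝒦_t-free weighted graph with d_{K_s}(R) = π_s(𝒦_t) whose number of vertices is minimum among all such graphs, then R admits an (s,1)-partition; that is, R has exactly s vertices, each of weight 1/s, and every edge weight equals 1/2. -/
open Filter

open Finset

lemma amgm_aux {V : Type} [Fintype V] (s : ℕ) (hs : 0 < s) (T : Finset V) (hT : T.card = s)
    (w : V → ℝ) (h0 : ∀ v ∈ T, 0 ≤ w v) (h1 : ∑ v ∈ T, w v = 1) :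
    ∏ v ∈ T, w v ≤ (1 / (s : ℝ)) ^ s := by
  have hsR : (0:ℝ) < s := by exact_mod_cast hs
  have key := Real.geom_mean_le_arith_mean_weighted T (fun _ => (s : ℝ)⁻¹) w
    (fun i _ => by positivity)
    (by rw [Finset.sum_const, hT, nsmul_eq_mul, mul_inv_cancel₀ (ne_of_gt hsR)])
    h0
  have hsum : ∑ i ∈ T, (s:ℝ)⁻¹ * w i = (s:ℝ)⁻¹ := by
    rw [← Finset.mul_sum, h1, mul_one]
  rw [hsum] at key
  have hprod : (∏ v ∈ T, w v ^ ((s:ℝ)⁻¹)) ^ s = ∏ v ∈ T, w v := by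
    rw [← Finset.prod_pow]
    refine Finset.prod_congr rfl fun v hv => ?_
    rw [← Real.rpow_natCast (w v ^ ((s:ℝ)⁻¹)) s, ← Real.rpow_mul (h0 v hv)]
    rw [inv_mul_cancel₀ (ne_of_gt hsR), Real.rpow_one]
  calc ∏ v ∈ T, w v = (∏ v ∈ T, w v ^ ((s:ℝ)⁻¹)) ^ s := hprod.symm
    _ ≤ ((s:ℝ)⁻¹) ^ s := by
        apply pow_le_pow_left₀ (Finset.prod_nonneg fun v hv => Real.rpow_nonneg (h0 v hv) _) key
    _ = (1 / (s:ℝ)) ^ s := by rw [one_div]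

lemma amgm_eq_aux {V : Type} [Fintype V] (s : ℕ) (hs : 0 < s) (T : Finset V) (hT : T.card = s)
    (w : V → ℝ) (h0 : ∀ v ∈ T, 0 ≤ w v) (h1 : ∑ v ∈ T, w v = 1)
    (heq : ∏ v ∈ T, w v = (1 / (s : ℝ)) ^ s) : ∀ v ∈ T, w v = 1 / (s : ℝ) := by
  classical
  have hsR : (0:ℝ) < s := by exact_mod_cast hs
  have hppos : (0:ℝ) < (1 / (s:ℝ)) ^ s := by positivity
  have hwpos : ∀ v ∈ T, 0 < w v := by
    intro v hv
    rcases lt_or_eq_of_le (h0 v hv) with h | h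
    · exact h
    · exfalso
      have : ∏ v ∈ T, w v = 0 := Finset.prod_eq_zero hv h.symm
      rw [this] at heq; linarith
  by_contra hne
  push_neg at hne
  obtain ⟨a, ha, hane⟩ := hne
  -- there is b in T with w b ≠ w a
  have hex : ∃ b ∈ T, w b ≠ w a := by
    by_contra hall
    push_neg at hall
    have : ∑ v ∈ T, w v = s * w a := by
      rw [Finset.sum_congr rfl hall, Finset.sum_const, hT, nsmul_eq_mul]
    rw [h1] at this
    apply hane
    field_simp
    linarith
  obtain ⟨b, hb, hbne⟩ := hex
  have hab : a ≠ b := fun h => hbne (by rw [h])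
  set m : ℝ := (w a + w b) / 2 with hm
  set w' : V → ℝ := Function.update (Function.update w a m) b m with hw'
  have hw'a : w' a = m := by
    simp only [hw', Function.update_apply]
    rw [if_neg hab]
    simp
  have hw'b : w' b = m := by simp [hw']
  have hw'other : ∀ x, x ≠ a → x ≠ b → w' x = w x := by
    intro x hxa hxb
    simp only [hw', Function.update_apply, if_neg hxb, if_neg hxa]
  have hmpos : 0 < m := by
    have := hwpos a ha; have := hwpos b hb
    rw [hm]; linarith
  have hbe : b ∈ T.erase a := Finset.mem_erase.2 ⟨fun h => hbne (by rw [h]), hb⟩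
  -- sums agree
  have hsum' : ∑ v ∈ T, w' v = 1 := by
    rw [← Finset.add_sum_erase T w' ha, ← Finset.add_sum_erase _ w' hbe]
    rw [← Finset.add_sum_erase T w ha, ← Finset.add_sum_erase _ w hbe] at h1
    have : ∑ x ∈ (T.erase a).erase b, w' x = ∑ x ∈ (T.erase a).erase b, w x := by
      refine Finset.sum_congr rfl fun x hx => ?_
      have hxb := (Finset.mem_erase.1 hx).1
      have hxa := (Finset.mem_erase.1 (Finset.mem_erase.1 hx).2).1
      exact hw'other x hxa hxb
    rw [this, hw'a, hw'b]
    rw [hm]; linarith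
  have h0' : ∀ v ∈ T, 0 ≤ w' v := by
    intro v hv
    by_cases hva : v = a
    · rw [hva, hw'a]; linarith
    by_cases hvb : v = b
    · rw [hvb, hw'b]; linarith
    · rw [hw'other v hva hvb]; exact h0 v hv
  -- products: ∏ w < ∏ w'
  have hrest_pos : 0 < ∏ x ∈ (T.erase a).erase b, w x := by
    apply Finset.prod_pos
    intro x hx
    exact hwpos x (Finset.mem_of_mem_erase (Finset.mem_of_mem_erase hx))
  have hprodw : ∏ v ∈ T, w v = w a * w b * ∏ x ∈ (T.erase a).erase b, w x := by
    rw [← Finset.mul_prod_erase T w ha, ← Finset.mul_prod_erase _ w hbe, mul_assoc]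
  have hprodw' : ∏ v ∈ T, w' v = m * m * ∏ x ∈ (T.erase a).erase b, w x := by
    rw [← Finset.mul_prod_erase T w' ha, ← Finset.mul_prod_erase _ w' hbe, hw'a, hw'b, mul_assoc]
    have : ∏ x ∈ (T.erase a).erase b, w' x = ∏ x ∈ (T.erase a).erase b, w x := by
      refine Finset.prod_congr rfl fun x hx => ?_
      have hxb := (Finset.mem_erase.1 hx).1
      have hxa := (Finset.mem_erase.1 (Finset.mem_erase.1 hx).2).1
      exact hw'other x hxa hxb
    rw [this]
  have hlt : w a * w b < m * m := by
    have h2 : w a ≠ w b := fun h => hbne h.symm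
    have h3 : (w a - w b) ≠ 0 := sub_ne_zero.2 h2
    have h4 : 0 < (w a - w b) ^ 2 := by positivity
    nlinarith [h4]
  have hle := amgm_aux s hs T hT w' h0' hsum'
  rw [hprodw'] at hle
  rw [heq] at hprodw
  nlinarith [hrest_pos]

section ClassicalScope
attribute [local instance] Classical.propDecidable

noncomputable def cliqueSum {V : Type} [Fintype V] (G : SimpleGraph V) (s : ℕ) (w : V → ℝ) : ℝ :=
  ∑ S ∈ Finset.univ.filter (fun S : Finset V => S.card = s ∧ G.IsClique (S : Set V)),
    ∏ v ∈ S, w v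

noncomputable def linkSum {V : Type} [Fintype V] (G : SimpleGraph V) (s : ℕ) (w : V → ℝ) (x : V) : ℝ :=
  ∑ S ∈ (Finset.univ.filter (fun S : Finset V => S.card = s ∧ G.IsClique (S : Set V))).filter
      (fun S => x ∈ S), ∏ y ∈ S.erase x, w y

lemma cliqueSum_shift {V : Type} [Fintype V] (G : SimpleGraph V) (s : ℕ) (w : V → ℝ)
    (h0 : ∀ v, 0 ≤ w v) {u v : V} (huv : u ≠ v) (hadj : ¬ G.Adj u v)
    (hl : linkSum G s w u ≤ linkSum G s w v) :
    cliqueSum G s w ≤ cliqueSum G s (Function.update (Function.update w u 0) v (w u + w v)) := by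
  set A := Finset.univ.filter (fun S : Finset V => S.card = s ∧ G.IsClique (S : Set V)) with hA
  set w' := Function.update (Function.update w u 0) v (w u + w v) with hw'
  have hw'u : w' u = 0 := by
    simp only [hw', Function.update_apply, if_neg huv]
    simp
  have hw'v : w' v = w u + w v := by simp [hw']
  have hw'other : ∀ x, x ≠ u → x ≠ v → w' x = w x := by
    intro x hxu hxv
    simp only [hw', Function.update_apply, if_neg hxv, if_neg hxu]
  -- no S in A contains both u and v
  have hnot : ∀ S ∈ A, u ∈ S → v ∈ S → False := by
    intro S hS hu hv
    have hcl := (Finset.mem_filter.1 hS).2.2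
    exact hadj (hcl (by simpa using hu) (by simpa using hv) huv)
  -- split both cliqueSums
  have split : ∀ f : V → ℝ,
      ∑ S ∈ A, ∏ y ∈ S, f y
        = (∑ S ∈ A.filter (fun S => u ∈ S), ∏ y ∈ S, f y)
          + ((∑ S ∈ (A.filter (fun S => u ∉ S)).filter (fun S => v ∈ S), ∏ y ∈ S, f y)
            + (∑ S ∈ (A.filter (fun S => u ∉ S)).filter (fun S => v ∉ S), ∏ y ∈ S, f y)) := by
    intro f
    rw [← Finset.sum_filter_add_sum_filter_not A (fun S => u ∈ S),
        ← Finset.sum_filter_add_sum_filter_not (A.filter (fun S => u ∉ S)) (fun S => v ∈ S)]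
  have hcs : cliqueSum G s w = ∑ S ∈ A, ∏ y ∈ S, w y := rfl
  have hcs' : cliqueSum G s w' = ∑ S ∈ A, ∏ y ∈ S, w' y := rfl
  rw [hcs, hcs', split w, split w']
  -- piece 1 for w': zero
  have p1' : ∑ S ∈ A.filter (fun S => u ∈ S), ∏ y ∈ S, w' y = 0 := by
    apply Finset.sum_eq_zero
    intro S hS
    exact Finset.prod_eq_zero (Finset.mem_filter.1 hS).2 hw'u
  -- piece 1 for w: w u * linkSum u
  have p1 : ∑ S ∈ A.filter (fun S => u ∈ S), ∏ y ∈ S, w y = w u * linkSum G s w u := by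
    rw [linkSum, ← hA, Finset.mul_sum]
    refine Finset.sum_congr rfl fun S hS => ?_
    exact (Finset.mul_prod_erase S w (Finset.mem_filter.1 hS).2).symm
  -- the double filter for v equals single filter
  have hfeq : (A.filter (fun S => u ∉ S)).filter (fun S => v ∈ S)
      = A.filter (fun S => v ∈ S) := by
    ext S
    simp only [Finset.mem_filter, and_assoc]
    constructor
    · tauto
    · rintro ⟨h1, h2⟩
      exact ⟨h1, fun hu => hnot S h1 hu h2, h2⟩
  -- piece 2 for w
  have p2 : ∑ S ∈ (A.filter (fun S => u ∉ S)).filter (fun S => v ∈ S), ∏ y ∈ S, w y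
      = w v * linkSum G s w v := by
    rw [hfeq, linkSum, ← hA, Finset.mul_sum]
    refine Finset.sum_congr rfl fun S hS => ?_
    exact (Finset.mul_prod_erase S w (Finset.mem_filter.1 hS).2).symm
  -- piece 2 for w'
  have p2' : ∑ S ∈ (A.filter (fun S => u ∉ S)).filter (fun S => v ∈ S), ∏ y ∈ S, w' y
      = (w u + w v) * linkSum G s w v := by
    rw [hfeq, linkSum, ← hA, Finset.mul_sum]
    refine Finset.sum_congr rfl fun S hS => ?_
    have hvS := (Finset.mem_filter.1 hS).2
    rw [← Finset.mul_prod_erase S w' hvS, hw'v]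
    congr 1
    refine Finset.prod_congr rfl fun x hx => ?_
    have hxv := (Finset.mem_erase.1 hx).1
    have hxu : x ≠ u := by
      intro h
      exact hnot S (Finset.mem_filter.1 hS).1 (h ▸ (Finset.mem_erase.1 hx).2) hvS
    exact hw'other x hxu hxv
  -- piece 3 equal
  have p3 : ∑ S ∈ (A.filter (fun S => u ∉ S)).filter (fun S => v ∉ S), ∏ y ∈ S, w' y
      = ∑ S ∈ (A.filter (fun S => u ∉ S)).filter (fun S => v ∉ S), ∏ y ∈ S, w y := by
    refine Finset.sum_congr rfl fun S hS => ?_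
    refine Finset.prod_congr rfl fun x hx => ?_
    have h1 : u ∉ S := (Finset.mem_filter.1 (Finset.mem_filter.1 hS).1).2
    have h2 : v ∉ S := (Finset.mem_filter.1 hS).2
    exact hw'other x (fun h => h1 (h ▸ hx)) (fun h => h2 (h ▸ hx))
  rw [p1, p1', p2, p2', p3]
  have := h0 u
  nlinarith [hl, h0 u]

lemma ms_main (s : ℕ) (hs : 0 < s) : ∀ (n : ℕ) (V : Type) (_ : Fintype V) (G : SimpleGraph V)
    (w : V → ℝ), (Finset.univ.filter (fun v => w v ≠ 0)).card ≤ n → G.CliqueFree (s+1) →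
    (∀ v, 0 ≤ w v) → ∑ v, w v = 1 → cliqueSum G s w ≤ (1 / (s:ℝ)) ^ s := by
  intro n
  induction n with
  | zero =>
    intro V _ G w hcard _ _ hsum
    exfalso
    have hempty : Finset.univ.filter (fun v => w v ≠ 0) = ∅ := Finset.card_eq_zero.1 (Nat.le_zero.1 hcard)
    have : ∑ v, w v = 0 := by
      apply Finset.sum_eq_zero
      intro v _
      by_contra h
      have : v ∈ Finset.univ.filter (fun v => w v ≠ 0) := Finset.mem_filter.2 ⟨Finset.mem_univ _, h⟩
      rw [hempty] at this
      exact absurd this (Finset.notMem_empty v)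
    rw [this] at hsum; norm_num at hsum
  | succ n ih =>
    intro V _ G w hcard hfree h0 hsum
    set supp := Finset.univ.filter (fun v => w v ≠ 0) with hsupp
    set A := Finset.univ.filter (fun S : Finset V => S.card = s ∧ G.IsClique (S : Set V)) with hA
    by_cases hcl : ∀ u ∈ supp, ∀ v ∈ supp, u ≠ v → G.Adj u v
    · -- support is a clique
      have hsuppcl : G.IsClique (supp : Set V) := by
        intro x hx y hy hxy
        exact hcl x (by simpa using hx) y (by simpa using hy) hxy
      have hsc : supp.card ≤ s := by
        by_contra hgt
        push_neg at hgt
        obtain ⟨T, hTs, hTc⟩ := Finset.exists_subset_card_eq hgt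
        exact hfree T ⟨hsuppcl.subset (by exact_mod_cast hTs), hTc⟩
      -- every nonzero term has S = supp
      have hterm : ∀ S ∈ A, ∏ v ∈ S, w v ≠ 0 → S = supp := by
        intro S hS hne
        have hsub : S ⊆ supp := by
          intro x hx
          refine Finset.mem_filter.2 ⟨Finset.mem_univ _, ?_⟩
          intro h
          exact hne (Finset.prod_eq_zero hx h)
        have hcard : supp.card ≤ S.card := by
          rw [(Finset.mem_filter.1 hS).2.1]; exact hsc
        exact (Finset.eq_of_subset_of_card_le hsub hcard)
      by_cases hz : ∀ S ∈ A, ∏ v ∈ S, w v = 0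
      · have : cliqueSum G s w = 0 := Finset.sum_eq_zero hz
        rw [this]; positivity
      · push_neg at hz
        obtain ⟨S₀, hS₀, hS₀ne⟩ := hz
        have hS₀eq : S₀ = supp := hterm S₀ hS₀ hS₀ne
        have : cliqueSum G s w = ∏ v ∈ S₀, w v := by
          apply Finset.sum_eq_single_of_mem S₀ hS₀
          intro S hS hSne
          by_contra h
          exact hSne (by rw [hterm S hS h, hS₀eq])
        rw [this]
        have hS₀card : S₀.card = s := (Finset.mem_filter.1 hS₀).2.1
        apply amgm_aux s hs S₀ hS₀card w (fun v _ => h0 v)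
        rw [← hsum]
        apply Finset.sum_subset (Finset.subset_univ _)
        intro x _ hx
        by_contra h
        have : x ∈ supp := Finset.mem_filter.2 ⟨Finset.mem_univ _, h⟩
        rw [← hS₀eq] at this
        exact hx this
    · -- non-adjacent pair in support: shift
      push_neg at hcl
      obtain ⟨u, hu, v, hv, huv, hadj⟩ := hcl
      have hwu : w u ≠ 0 := (Finset.mem_filter.1 hu).2
      have happly : ∀ (u v : V), u ≠ v → ¬ G.Adj u v → u ∈ supp → v ∈ supp →
          linkSum G s w u ≤ linkSum G s w v →
          cliqueSum G s w ≤ (1 / (s:ℝ)) ^ s := by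
        clear huv hadj hu hv hwu u v
        intro u v huv hadj hu hv hl
        set w' := Function.update (Function.update w u 0) v (w u + w v) with hw'
        have hw'u : w' u = 0 := by
          simp only [hw', Function.update_apply, if_neg huv]; simp
        have hw'v : w' v = w u + w v := by simp [hw']
        have hw'other : ∀ x, x ≠ u → x ≠ v → w' x = w x := by
          intro x hxu hxv
          simp only [hw', Function.update_apply, if_neg hxv, if_neg hxu]
        have hstep := cliqueSum_shift G s w h0 huv hadj hl
        refine le_trans hstep (ih V _ G w' ?_ hfree ?_ ?_)
        · -- support shrinks
          have hsub : Finset.univ.filter (fun x => w' x ≠ 0) ⊆ supp.erase u := by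
            intro x hx
            have hxne : w' x ≠ 0 := (Finset.mem_filter.1 hx).2
            have hxu : x ≠ u := by
              intro h; rw [h, hw'u] at hxne; exact hxne rfl
            refine Finset.mem_erase.2 ⟨hxu, ?_⟩
            by_cases hxv : x = v
            · rw [hxv]; exact hv
            · refine Finset.mem_filter.2 ⟨Finset.mem_univ _, ?_⟩
              rw [← hw'other x hxu hxv]; exact hxne
          calc (Finset.univ.filter (fun x => w' x ≠ 0)).card ≤ (supp.erase u).card :=
                Finset.card_le_card hsub
            _ = supp.card - 1 := Finset.card_erase_of_mem hu
            _ ≤ (n + 1) - 1 := Nat.sub_le_sub_right hcard 1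
            _ = n := rfl
        · intro x
          by_cases hxv : x = v
          · rw [hxv, hw'v]; have := h0 u; have := h0 v; linarith
          by_cases hxu : x = u
          · rw [hxu, hw'u]
          · rw [hw'other x hxu hxv]; exact h0 x
        · -- sum preserved
          have huv' : u ∈ (Finset.univ : Finset V).erase v := Finset.mem_erase.2 ⟨huv, Finset.mem_univ _⟩
          rw [← hsum]
          rw [← Finset.add_sum_erase _ w' (Finset.mem_univ v),
              ← Finset.add_sum_erase _ w' huv',
              ← Finset.add_sum_erase _ w (Finset.mem_univ v),
              ← Finset.add_sum_erase _ w huv', hw'v, hw'u]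
          have : ∑ x ∈ (Finset.univ.erase v).erase u, w' x
              = ∑ x ∈ (Finset.univ.erase v).erase u, w x := by
            refine Finset.sum_congr rfl fun x hx => ?_
            have hxu := (Finset.mem_erase.1 hx).1
            have hxv := (Finset.mem_erase.1 (Finset.mem_erase.1 hx).2).1
            exact hw'other x hxu hxv
          rw [this]; ring
      rcases le_total (linkSum G s w u) (linkSum G s w v) with hl | hl
      · exact happly u v huv hadj hu hv hl
      · exact happly v u huv.symm (fun h => hadj h.symm) hv hu hl

lemma fiber_card {V : Type} [Fintype V] (s : ℕ) (S : Finset V) (hS : S.card = s) :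
    (Finset.univ.filter (fun σ : Fin s → V => Finset.image σ Finset.univ = S)).card
      = Nat.factorial s := by
  classical
  have h1 : (Finset.univ.filter (fun σ : Fin s → V => Finset.image σ Finset.univ = S)).card
      = Fintype.card {σ : Fin s → V // Finset.image σ Finset.univ = S} :=
    (Fintype.card_subtype _).symm
  rw [h1]
  have e : {σ : Fin s → V // Finset.image σ Finset.univ = S} ≃ (Fin s ↪ {x // x ∈ S}) := by
    refine
      { toFun := fun σ => ⟨fun i => ⟨σ.1 i, by
          have h := Finset.mem_image_of_mem σ.1 (Finset.mem_univ i)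
          rwa [σ.2] at h⟩, ?_⟩
        invFun := fun e => ⟨fun i => (e i : V), ?_⟩
        left_inv := ?_
        right_inv := ?_ }
    · -- injectivity of the embedding
      rcases σ with ⟨σ, hσ⟩
      have hinj : Function.Injective σ := by
        have hc : (Finset.image σ Finset.univ).card = (Finset.univ : Finset (Fin s)).card := by
          rw [hσ, hS, Finset.card_univ, Fintype.card_fin]
        have := Finset.card_image_iff.1 hc
        intro a b hab
        exact this (by simp) (by simp) hab
      intro a b hab
      exact hinj (congrArg Subtype.val hab)
    · -- image of the coerced embedding is S
      have hinj : Function.Injective (fun i : Fin s => (e i : V)) := by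
        intro a b hab
        exact e.injective (Subtype.ext hab)
      have hsub : Finset.image (fun i : Fin s => (e i : V)) Finset.univ ⊆ S := by
        intro x hx
        obtain ⟨i, _, hi⟩ := Finset.mem_image.1 hx
        rw [← hi]; exact (e i).2
      apply Finset.eq_of_subset_of_card_le hsub
      rw [Finset.card_image_of_injective _ hinj, Finset.card_univ, Fintype.card_fin, hS]
    · intro σ; rfl
    · intro e; rfl
  rw [Fintype.card_congr e, Fintype.card_embedding_eq, Fintype.card_coe, hS, Fintype.card_fin,
    Nat.descFactorial_self]

lemma sum_inj_eq {V : Type} [Fintype V] (G : SimpleGraph V) (s : ℕ) (w : V → ℝ) :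
    ∑ σ ∈ Finset.univ.filter (fun σ : Fin s → V =>
        Function.Injective σ ∧ G.IsClique ((Finset.image σ Finset.univ : Finset V) : Set V)),
      ∏ i, w (σ i)
    = (Nat.factorial s) * cliqueSum G s w := by
  classical
  set A := Finset.univ.filter (fun σ : Fin s → V =>
      Function.Injective σ ∧ G.IsClique ((Finset.image σ Finset.univ : Finset V) : Set V)) with hA
  set B := Finset.univ.filter (fun S : Finset V => S.card = s ∧ G.IsClique (S : Set V)) with hB
  have hmaps : ∀ σ ∈ A, Finset.image σ Finset.univ ∈ B := by
    intro σ hσ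
    obtain ⟨hinj, hcl⟩ := (Finset.mem_filter.1 hσ).2
    refine Finset.mem_filter.2 ⟨Finset.mem_univ _, ?_, hcl⟩
    rw [Finset.card_image_of_injective _ hinj, Finset.card_univ, Fintype.card_fin]
  rw [← Finset.sum_fiberwise_of_maps_to hmaps]
  rw [cliqueSum, ← hB, Finset.mul_sum]
  refine Finset.sum_congr rfl fun S hS => ?_
  obtain ⟨hcard, hclS⟩ := (Finset.mem_filter.1 hS).2
  -- fibers: A.filter (image = S) = filter (image = S)
  have hfib : A.filter (fun σ => Finset.image σ Finset.univ = S)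
      = Finset.univ.filter (fun σ : Fin s → V => Finset.image σ Finset.univ = S) := by
    ext σ
    simp only [hA, Finset.mem_filter, Finset.mem_univ, true_and, and_assoc]
    constructor
    · tauto
    · intro himg
      have hinj : Function.Injective σ := by
        have hc : (Finset.image σ Finset.univ).card = (Finset.univ : Finset (Fin s)).card := by
          rw [himg, hcard, Finset.card_univ, Fintype.card_fin]
        have := Finset.card_image_iff.1 hc
        intro a b hab
        exact this (by simp) (by simp) hab
      exact ⟨hinj, by rw [himg]; exact hclS, himg⟩
  rw [hfib]
  have hterm : ∀ σ ∈ Finset.univ.filter (fun σ : Fin s → V => Finset.image σ Finset.univ = S),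
      ∏ i, w (σ i) = ∏ v ∈ S, w v := by
    intro σ hσ
    have himg := (Finset.mem_filter.1 hσ).2
    have hinj : Set.InjOn σ (Finset.univ : Finset (Fin s)) := by
      apply Finset.card_image_iff.1
      rw [himg, hcard, Finset.card_univ, Fintype.card_fin]
    rw [← himg, Finset.prod_image (fun a ha b hb hab => hinj ha hb hab)]
  rw [Finset.sum_congr rfl hterm, Finset.sum_const, fiber_card s S hcard, nsmul_eq_mul]

section WGAux

open Finset

attribute [local instance] Classical.propDecidable

/-- number of ordered pairs (i,j), i<j, in Fin s -/
def Kc (s : ℕ) : ℕ := (Finset.univ.filter (fun p : Fin s × Fin s => p.1 < p.2)).card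

noncomputable def cVal (s : ℕ) : ℝ :=
  (Nat.factorial s : ℝ) * ((1 / (s:ℝ)) ^ s * (1/2 : ℝ) ^ (Kc s))

lemma cVal_pos (s : ℕ) (hs : 0 < s) : 0 < cVal s := by
  have h1 : (0:ℝ) < Nat.factorial s := by exact_mod_cast Nat.factorial_pos s
  have h2 : (0:ℝ) < (1/(s:ℝ)) := by positivity
  have h3 : (0:ℝ) < (1/(s:ℝ))^s := pow_pos h2 s
  have h4 : (0:ℝ) < (1/2:ℝ)^(Kc s) := by positivity
  exact mul_pos h1 (mul_pos h3 h4)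

lemma gtGraph_adj {V : Type} [Fintype V] (R : WeightedGraph V) (α : ℝ) (u v : V) :
    (R.gtGraph α).Adj u v ↔ u ≠ v ∧ α < R.ew u v := Iff.rfl

lemma prod_ew_zero_of_pair {V : Type} [Fintype V] (R : WeightedGraph V) {m : ℕ}
    (σ : Fin m → V) {i j : Fin m} (hij : i ≠ j) (hz : R.ew (σ i) (σ j) = 0) :
    ∏ p ∈ Finset.univ.filter (fun p : Fin m × Fin m => p.1 < p.2), R.ew (σ p.1) (σ p.2) = 0 := by
  rcases lt_or_gt_of_ne hij with hlt | hlt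
  · exact Finset.prod_eq_zero
      (Finset.mem_filter.2 ⟨Finset.mem_univ ((i, j) : Fin m × Fin m), hlt⟩) hz
  · refine Finset.prod_eq_zero
      (Finset.mem_filter.2 ⟨Finset.mem_univ ((j, i) : Fin m × Fin m), hlt⟩) ?_
    rw [R.ew_symm]; exact hz

lemma term_zero {V : Type} [Fintype V] (R : WeightedGraph V) {m : ℕ} {σ : Fin m → V}
    (h : ¬ Function.Injective σ) :
    ∏ p ∈ Finset.univ.filter (fun p : Fin m × Fin m => p.1 < p.2), R.ew (σ p.1) (σ p.2) = 0 := by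
  simp only [Function.Injective] at h
  push_neg at h
  obtain ⟨i, j, hij, hne⟩ := h
  exact prod_ew_zero_of_pair R σ hne (by rw [hij]; exact R.ew_self _)

lemma gtGraph_cliqueFree {V : Type} [Fintype V] (s : ℕ) (R : WeightedGraph V)
    (hfree : R.KtFree (s+2)) : (R.gtGraph 0).CliqueFree (s+1) := by
  intro T hT
  have hcard := hT.2
  have hne : T.Nonempty := by rw [← Finset.card_pos, hcard]; omega
  obtain ⟨t, ht⟩ := hne
  refine hfree ⟨T, {t}, Finset.singleton_subset_iff.2 ht, by simp, ?_, hT.1, ?_⟩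
  · rw [hcard, Finset.card_singleton]
  · simp only [Finset.coe_singleton]
    exact Set.pairwise_singleton _ _

lemma ew_le_half {V : Type} [Fintype V] (s : ℕ) (R : WeightedGraph V) (hfree : R.KtFree (s+2))
    (S₁ : Finset V) (hcl : (R.gtGraph 0).IsClique (S₁ : Set V)) (hcard : S₁.card = s)
    {u v : V} (hu : u ∈ S₁) (hv : v ∈ S₁) (huv : u ≠ v) : R.ew u v ≤ 1/2 := by
  by_contra hgt
  push_neg at hgt
  apply hfree
  refine ⟨S₁, {u, v}, ?_, ?_, ?_, hcl, ?_⟩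
  · intro x hx
    rcases Finset.mem_insert.1 hx with rfl | hx
    · exact hu
    · rw [Finset.mem_singleton.1 hx]; exact hv
  · simp
  · rw [hcard, Finset.card_insert_of_notMem (by simpa using huv), Finset.card_singleton]
  · intro x hx y hy hxy
    simp only [Finset.coe_insert, Set.mem_insert_iff, Finset.coe_singleton,
      Set.mem_singleton_iff] at hx hy
    rcases hx with rfl | rfl <;> rcases hy with rfl | rfl
    · exact absurd rfl hxy
    · exact ⟨hxy, hgt⟩
    · exact ⟨hxy, by rw [R.ew_symm]; exact hgt⟩
    · exact absurd rfl hxy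

lemma density_le {V : Type} [Fintype V] (s : ℕ) (hs : 0 < s) (R : WeightedGraph V)
    (hfree : R.KtFree (s+2)) : R.density s ≤ cVal s := by
  have hKF := gtGraph_cliqueFree s R hfree
  set G := R.gtGraph 0 with hG
  have hhalf : ((1:ℝ)/2) ^ (Kc s)
      = ∏ _p ∈ Finset.univ.filter (fun p : Fin s × Fin s => p.1 < p.2), (1/2 : ℝ) := by
    rw [Finset.prod_const, Kc]
  have hterm : ∀ σ : Fin s → V,
      (∏ i, R.vw (σ i)) *
        ∏ p ∈ Finset.univ.filter (fun p : Fin s × Fin s => p.1 < p.2), R.ew (σ p.1) (σ p.2)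
      ≤ (if Function.Injective σ ∧ G.IsClique ((Finset.image σ Finset.univ : Finset V) : Set V)
          then (∏ i, R.vw (σ i)) * (1/2:ℝ)^(Kc s) else 0) := by
    intro σ
    by_cases hinj : Function.Injective σ
    · by_cases hcl : G.IsClique ((Finset.image σ Finset.univ : Finset V) : Set V)
      · rw [if_pos ⟨hinj, hcl⟩]
        apply mul_le_mul_of_nonneg_left _ (Finset.prod_nonneg fun i _ => R.vw_nonneg _)
        rw [hhalf]
        apply Finset.prod_le_prod (fun p _ => R.ew_nonneg _ _)
        intro p hp
        have hplt : p.1 < p.2 := (Finset.mem_filter.1 hp).2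
        refine ew_le_half s R hfree _ hcl ?_ ?_ ?_ (hinj.ne (ne_of_lt hplt))
        · rw [Finset.card_image_of_injective _ hinj, Finset.card_univ, Fintype.card_fin]
        · exact Finset.mem_image_of_mem _ (Finset.mem_univ _)
        · exact Finset.mem_image_of_mem _ (Finset.mem_univ _)
      · rw [if_neg (by tauto)]
        rw [SimpleGraph.isClique_iff, Set.Pairwise] at hcl
        push_neg at hcl
        obtain ⟨x, hx, y, hy, hxy, hnadj⟩ := hcl
        obtain ⟨i, _, rfl⟩ := Finset.mem_image.1 (by exact_mod_cast hx)
        obtain ⟨j, _, rfl⟩ := Finset.mem_image.1 (by exact_mod_cast hy)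
        have hij : i ≠ j := fun h => hxy (by rw [h])
        have hz : R.ew (σ i) (σ j) = 0 := by
          have := R.ew_nonneg (σ i) (σ j)
          rcases lt_or_eq_of_le this with h | h
          · exact absurd ⟨hxy, h⟩ hnadj
          · exact h.symm
        rw [prod_ew_zero_of_pair R σ hij hz, mul_zero]
    · rw [if_neg (by tauto), term_zero R hinj, mul_zero]
  have h1 : R.density s
      ≤ ∑ σ : Fin s → V,
        (if Function.Injective σ ∧ G.IsClique ((Finset.image σ Finset.univ : Finset V) : Set V)
          then (∏ i, R.vw (σ i)) * (1/2:ℝ)^(Kc s) else 0) := by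
    rw [WeightedGraph.density]
    exact Finset.sum_le_sum fun σ _ => hterm σ
  rw [← Finset.sum_filter, ← Finset.sum_mul, sum_inj_eq G s R.vw] at h1
  have h2 : cliqueSum G s R.vw ≤ (1/(s:ℝ))^s :=
    ms_main s hs (Fintype.card V) V _ G R.vw (Finset.card_filter_le _ _ |>.trans (by
      rw [Finset.card_univ])) hKF R.vw_nonneg R.vw_sum
  calc R.density s ≤ (Nat.factorial s : ℝ) * cliqueSum G s R.vw * (1/2:ℝ)^(Kc s) := h1
    _ ≤ (Nat.factorial s : ℝ) * ((1/(s:ℝ))^s) * (1/2:ℝ)^(Kc s) := by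
        apply mul_le_mul_of_nonneg_right _ (by positivity)
        apply mul_le_mul_of_nonneg_left h2 (by positivity)
    _ = cVal s := by rw [cVal]; ring

end WGAux

section Canonical
open Finset

noncomputable def canonical (s : ℕ) (hs : 0 < s) : WeightedGraph (Fin s) where
  vw := fun _ => 1/(s:ℝ)
  ew := fun u v => if u = v then 0 else 1/2
  vw_nonneg := fun _ => by positivity
  vw_le_one := fun _ => by
    have h1 : (1:ℝ) ≤ (s:ℝ) := by exact_mod_cast hs
    rw [div_le_one (by linarith)]
    exact h1
  vw_sum := by
    rw [Finset.sum_const, Finset.card_univ, Fintype.card_fin, nsmul_eq_mul]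
    field_simp
  ew_nonneg := fun u v => by split <;> norm_num
  ew_le_one := fun u v => by split <;> norm_num
  ew_symm := fun u v => by
    rcases eq_or_ne u v with rfl | h
    · rfl
    · rw [if_neg h, if_neg (Ne.symm h)]
  ew_self := fun v => by simp

lemma canonical_ktFree (s : ℕ) (hs : 0 < s) : (canonical s hs).KtFree (s+2) := by
  rintro ⟨S₁, S₂, hsub, hc2, hsumc, _hcl1, hcl2⟩
  have h2 : S₂.card ≤ 1 := by
    rw [Finset.card_le_one]
    intro a ha b hb
    by_contra hab
    have hadj := hcl2 (Finset.mem_coe.2 ha) (Finset.mem_coe.2 hb) hab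
    have h12 : (1:ℝ)/2 < (canonical s hs).ew a b := hadj.2
    have heq : (canonical s hs).ew a b = 1/2 := by
      show (if a = b then (0:ℝ) else 1/2) = 1/2
      rw [if_neg hab]
    rw [heq] at h12
    linarith
  have h1 : S₁.card ≤ s := by
    calc S₁.card ≤ (Finset.univ : Finset (Fin s)).card := Finset.card_le_univ _
      _ = s := by rw [Finset.card_univ, Fintype.card_fin]
  omega

lemma canonical_density (s : ℕ) (hs : 0 < s) : (canonical s hs).density s = cVal s := by
  refine le_antisymm (density_le s hs _ (canonical_ktFree s hs)) ?_
  set R := canonical s hs with hR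
  have hterm0 : ∀ σ : Fin s → Fin s, 0 ≤ (∏ i, R.vw (σ i)) *
      ∏ p ∈ Finset.univ.filter (fun p : Fin s × Fin s => p.1 < p.2), R.ew (σ p.1) (σ p.2) := by
    intro σ
    exact mul_nonneg (Finset.prod_nonneg fun i _ => R.vw_nonneg _)
      (Finset.prod_nonneg fun p _ => R.ew_nonneg _ _)
  have hIcard : (Finset.univ.filter (fun σ : Fin s → Fin s => Function.Injective σ)).card
      = Nat.factorial s := by
    rw [← Fintype.card_subtype,
      Fintype.card_congr (Equiv.subtypeInjectiveEquivEmbedding (Fin s) (Fin s)),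
      Fintype.card_embedding_eq, Fintype.card_fin, Nat.descFactorial_self]
  have htermval : ∀ σ ∈ Finset.univ.filter (fun σ : Fin s → Fin s => Function.Injective σ),
      (∏ i, R.vw (σ i)) *
        ∏ p ∈ Finset.univ.filter (fun p : Fin s × Fin s => p.1 < p.2), R.ew (σ p.1) (σ p.2)
      = (1/(s:ℝ))^s * (1/2:ℝ)^(Kc s) := by
    intro σ hσ
    have hinj : Function.Injective σ := (Finset.mem_filter.1 hσ).2
    have h1 : ∏ i, R.vw (σ i) = (1/(s:ℝ))^s := by
      have hc : ∀ i ∈ (Finset.univ : Finset (Fin s)), R.vw (σ i) = 1/(s:ℝ) := fun i _ => rfl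
      rw [Finset.prod_congr rfl hc, Finset.prod_const, Finset.card_univ, Fintype.card_fin]
    have h2 : ∏ p ∈ Finset.univ.filter (fun p : Fin s × Fin s => p.1 < p.2),
        R.ew (σ p.1) (σ p.2) = (1/2:ℝ)^(Kc s) := by
      have hfac : ∀ p ∈ Finset.univ.filter (fun p : Fin s × Fin s => p.1 < p.2),
          R.ew (σ p.1) (σ p.2) = 1/2 := by
        intro p hp
        have hplt : p.1 < p.2 := (Finset.mem_filter.1 hp).2
        have hne := hinj.ne (ne_of_lt hplt)
        show (if σ p.1 = σ p.2 then (0:ℝ) else 1/2) = 1/2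
        rw [if_neg hne]
      rw [Finset.prod_congr rfl hfac, Finset.prod_const, Kc]
    rw [h1, h2]
  calc cVal s = ∑ σ ∈ Finset.univ.filter (fun σ : Fin s → Fin s => Function.Injective σ),
        (∏ i, R.vw (σ i)) *
          ∏ p ∈ Finset.univ.filter (fun p : Fin s × Fin s => p.1 < p.2), R.ew (σ p.1) (σ p.2) := by
        rw [Finset.sum_congr rfl htermval, Finset.sum_const, hIcard, nsmul_eq_mul, cVal]
    _ ≤ ∑ σ : Fin s → Fin s, (∏ i, R.vw (σ i)) *
          ∏ p ∈ Finset.univ.filter (fun p : Fin s × Fin s => p.1 < p.2), R.ew (σ p.1) (σ p.2) :=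
        Finset.sum_le_sum_of_subset_of_nonneg (Finset.filter_subset _ _)
          (fun σ _ _ => hterm0 σ)
    _ = R.density s := by rw [WeightedGraph.density]

lemma piSup_eq (s : ℕ) (hs : 0 < s) : piSup s (s+2) = cVal s := by
  have hmem : cVal s ∈ {x : ℝ | ∃ (V : Type) (_ : Fintype V) (R : WeightedGraph V),
      R.KtFree (s+2) ∧ R.density s = x} :=
    ⟨Fin s, inferInstance, canonical s hs, canonical_ktFree s hs, canonical_density s hs⟩
  have hub : ∀ x ∈ {x : ℝ | ∃ (V : Type) (_ : Fintype V) (R : WeightedGraph V),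
      R.KtFree (s+2) ∧ R.density s = x}, x ≤ cVal s := by
    rintro x ⟨W, hW, R, hfree, hd⟩
    rw [← hd]
    exact density_le s hs R hfree
  refine le_antisymm (csSup_le ⟨cVal s, hmem⟩ hub) (le_csSup ⟨cVal s, hub⟩ hmem)

end Canonical

section FinalAnalysis
open Finset
attribute [local instance] Classical.propDecidable

lemma card_ge_of_density_ne_zero {V : Type} [Fintype V] (s : ℕ) (R : WeightedGraph V)
    (hdens : R.density s ≠ 0) : s ≤ Fintype.card V := by
  rw [WeightedGraph.density] at hdens
  obtain ⟨σ, _, hσ⟩ := Finset.exists_ne_zero_of_sum_ne_zero hdens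
  have hinj : Function.Injective σ := by
    by_contra h
    rw [term_zero R h, mul_zero] at hσ
    exact hσ rfl
  calc s = Fintype.card (Fin s) := (Fintype.card_fin s).symm
    _ ≤ Fintype.card V := Fintype.card_le_of_injective σ hinj

lemma final_structure {V : Type} [Fintype V] (s : ℕ) (hs : 3 ≤ s) (R : WeightedGraph V)
    (hfree : R.KtFree (s+2)) (hdens : R.density s = cVal s) (hcard : Fintype.card V = s) :
    (∀ v : V, R.vw v = 1/(s:ℝ)) ∧ (∀ u v : V, u ≠ v → R.ew u v = 1/2) := by
  have hs0 : 0 < s := by omega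
  have hcpos := cVal_pos s hs0
  set Kp := Finset.univ.filter (fun p : Fin s × Fin s => p.1 < p.2) with hKp
  have hKcKp : Kp.card = Kc s := by rw [hKp, Kc]
  set I := Finset.univ.filter (fun σ : Fin s → V => Function.Injective σ) with hI
  have hIcard : I.card = Nat.factorial s := by
    rw [hI, ← Fintype.card_subtype,
      Fintype.card_congr (Equiv.subtypeInjectiveEquivEmbedding (Fin s) V),
      Fintype.card_embedding_eq, hcard, Fintype.card_fin, Nat.descFactorial_self]
  set W := ∏ v, R.vw v with hW
  have hWnn : 0 ≤ W := Finset.prod_nonneg fun v _ => R.vw_nonneg v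
  have hWσ : ∀ σ : Fin s → V, Function.Injective σ → ∏ i, R.vw (σ i) = W := by
    intro σ hinj
    exact Fintype.prod_bijective σ ((Fintype.bijective_iff_injective_and_card σ).2
      ⟨hinj, by rw [Fintype.card_fin, hcard]⟩) _ _ (fun x => rfl)
  have hdsum2 : ∑ σ ∈ I, W * (∏ p ∈ Kp, R.ew (σ p.1) (σ p.2)) = cVal s := by
    rw [← hdens, WeightedGraph.density, hI, Finset.sum_filter]
    refine Finset.sum_congr rfl fun σ _ => ?_
    by_cases hinj : Function.Injective σ
    · rw [if_pos hinj, hWσ σ hinj]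
    · rw [if_neg hinj, term_zero R hinj, mul_zero]
  -- termwise bound
  have hEle : ∀ σ : Fin s → V, Function.Injective σ →
      W * (∏ p ∈ Kp, R.ew (σ p.1) (σ p.2)) ≤ W * (1/2:ℝ)^(Kc s) := by
    intro σ hinj
    by_cases hcl : (R.gtGraph 0).IsClique ((Finset.image σ Finset.univ : Finset V) : Set V)
    · apply mul_le_mul_of_nonneg_left _ hWnn
      rw [← hKcKp, ← Finset.prod_const]
      apply Finset.prod_le_prod (fun p _ => R.ew_nonneg _ _)
      intro p hp
      have hplt : p.1 < p.2 := (Finset.mem_filter.1 hp).2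
      refine ew_le_half s R hfree _ hcl ?_ ?_ ?_ (hinj.ne (ne_of_lt hplt))
      · rw [Finset.card_image_of_injective _ hinj, Finset.card_univ, Fintype.card_fin]
      · exact Finset.mem_image_of_mem _ (Finset.mem_univ _)
      · exact Finset.mem_image_of_mem _ (Finset.mem_univ _)
    · rw [SimpleGraph.isClique_iff, Set.Pairwise] at hcl
      push_neg at hcl
      obtain ⟨x, hx, y, hy, hxy, hnadj⟩ := hcl
      obtain ⟨i, _, rfl⟩ := Finset.mem_image.1 (by exact_mod_cast hx)
      obtain ⟨j, _, rfl⟩ := Finset.mem_image.1 (by exact_mod_cast hy)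
      have hij : i ≠ j := fun h => hxy (by rw [h])
      have hz : R.ew (σ i) (σ j) = 0 := by
        have h := R.ew_nonneg (σ i) (σ j)
        rcases lt_or_eq_of_le h with h | h
        · exact absurd ⟨hxy, h⟩ hnadj
        · exact h.symm
      rw [hKp, prod_ew_zero_of_pair R σ hij hz, mul_zero]
      positivity
  have hsum_ub : ∑ σ ∈ I, W * (1/2:ℝ)^(Kc s) = (Nat.factorial s : ℝ) * (W * (1/2:ℝ)^(Kc s)) := by
    rw [Finset.sum_const, hIcard, nsmul_eq_mul]
  have hsumle : cVal s ≤ (Nat.factorial s : ℝ) * (W * (1/2:ℝ)^(Kc s)) := by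
    rw [← hdsum2, ← hsum_ub]
    exact Finset.sum_le_sum fun σ hσ => hEle σ (Finset.mem_filter.1 hσ).2
  have hAM : W ≤ (1/(s:ℝ))^s :=
    amgm_aux s hs0 Finset.univ (by rw [Finset.card_univ, hcard]) R.vw
      (fun v _ => R.vw_nonneg v) R.vw_sum
  have hWeq : W = (1/(s:ℝ))^s := by
    by_contra hne
    have hlt : W < (1/(s:ℝ))^s := lt_of_le_of_ne hAM hne
    have hfp : (0:ℝ) < Nat.factorial s := by exact_mod_cast Nat.factorial_pos s
    have hhp : (0:ℝ) < (1/2:ℝ)^(Kc s) := by positivity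
    have h2 : (Nat.factorial s : ℝ) * (W * (1/2:ℝ)^(Kc s)) < cVal s := by
      rw [cVal]
      have := mul_lt_mul_of_pos_right hlt hhp
      nlinarith
    linarith
  have hvw : ∀ v : V, R.vw v = 1/(s:ℝ) := by
    intro v
    exact amgm_eq_aux s hs0 Finset.univ (by rw [Finset.card_univ, hcard]) R.vw
      (fun v _ => R.vw_nonneg v) R.vw_sum (by rw [← hW]; exact hWeq) v (Finset.mem_univ v)
  have hWpos : 0 < W := by rw [hWeq]; positivity
  have hEeq : ∀ σ ∈ I, W * (∏ p ∈ Kp, R.ew (σ p.1) (σ p.2)) = W * (1/2:ℝ)^(Kc s) := by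
    apply (Finset.sum_eq_sum_iff_of_le (fun σ hσ => hEle σ (Finset.mem_filter.1 hσ).2)).1
    rw [hdsum2, hsum_ub, cVal, hWeq]
  have hEeq' : ∀ σ ∈ I, (∏ p ∈ Kp, R.ew (σ p.1) (σ p.2)) = (1/2:ℝ)^(Kc s) := fun σ hσ =>
    mul_left_cancel₀ (ne_of_gt hWpos) (hEeq σ hσ)
  -- all edges positive
  have e0 : V ≃ Fin s := Fintype.equivFinOfCardEq hcard
  have hewpos : ∀ x y : V, x ≠ y → 0 < R.ew x y := by
    intro x y hxy
    have hmem : ⇑e0.symm ∈ I := Finset.mem_filter.2 ⟨Finset.mem_univ _, e0.symm.injective⟩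
    have hE := hEeq' _ hmem
    have hnz : ∀ p ∈ Kp, R.ew (e0.symm p.1) (e0.symm p.2) ≠ 0 :=
      Finset.prod_ne_zero_iff.1 (by rw [hE]; positivity)
    have hne12 : e0 x ≠ e0 y := fun h => hxy (e0.injective h)
    rcases lt_or_gt_of_ne hne12 with h | h
    · have hz := hnz (e0 x, e0 y) (Finset.mem_filter.2 ⟨Finset.mem_univ _, h⟩)
      simp only [Equiv.symm_apply_apply] at hz
      exact lt_of_le_of_ne (R.ew_nonneg x y) (Ne.symm hz)
    · have hz := hnz (e0 y, e0 x) (Finset.mem_filter.2 ⟨Finset.mem_univ _, h⟩)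
      simp only [Equiv.symm_apply_apply] at hz
      rw [R.ew_symm y x] at hz
      exact lt_of_le_of_ne (R.ew_nonneg x y) (Ne.symm hz)
  have hclu : (R.gtGraph 0).IsClique ((Finset.univ : Finset V) : Set V) := by
    intro x _ y _ hxy
    exact ⟨hxy, hewpos x y hxy⟩
  have hlehalf : ∀ x y : V, x ≠ y → R.ew x y ≤ 1/2 := fun x y hxy =>
    ew_le_half s R hfree Finset.univ hclu (by rw [Finset.card_univ, hcard])
      (Finset.mem_univ x) (Finset.mem_univ y) hxy
  refine ⟨hvw, ?_⟩
  intro u v huv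
  by_contra hnee
  have hlt : R.ew u v < 1/2 := lt_of_le_of_ne (hlehalf u v huv) hnee
  have h1s : 1 < s := by omega
  set i0 : Fin s := ⟨0, hs0⟩ with hi0
  set i1 : Fin s := ⟨1, h1s⟩ with hi1
  have hi01 : i0 ≠ i1 := by
    rw [hi0, hi1]
    intro h
    simpa using congrArg Fin.val h
  set g : Fin s ≃ V := e0.symm with hg
  set g1 : Fin s ≃ V := (Equiv.swap i0 (g.symm u)).trans g with hg1
  have hg1u : g1 i0 = u := by
    rw [hg1]
    simp [Equiv.swap_apply_left]
  set a : Fin s := g1.symm v with ha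
  have hai0 : a ≠ i0 := by
    intro h
    apply huv
    have : v = g1 a := by rw [ha, Equiv.apply_symm_apply]
    rw [this, h, hg1u]
  set g2 : Fin s ≃ V := (Equiv.swap i1 a).trans g1 with hg2
  have hg2v : g2 i1 = v := by
    rw [hg2]
    simp only [Equiv.trans_apply, Equiv.swap_apply_left]
    rw [ha, Equiv.apply_symm_apply]
  have hg2u : g2 i0 = u := by
    rw [hg2]
    simp only [Equiv.trans_apply]
    rw [Equiv.swap_apply_of_ne_of_ne hi01 (Ne.symm hai0), hg1u]
  set σ : Fin s → V := ⇑g2 with hσdef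
  have hmem : σ ∈ I := Finset.mem_filter.2 ⟨Finset.mem_univ _, g2.injective⟩
  have hE := hEeq' σ hmem
  have hp0 : ((i0, i1) : Fin s × Fin s) ∈ Kp := by
    refine Finset.mem_filter.2 ⟨Finset.mem_univ _, ?_⟩
    show i0 < i1
    rw [hi0, hi1, Fin.mk_lt_mk]
    norm_num
  have hKpos : 0 < Kc s := by
    rw [← hKcKp]
    exact Finset.card_pos.2 ⟨_, hp0⟩
  have hsplitE : ∏ p ∈ Kp, R.ew (σ p.1) (σ p.2)
      = R.ew (σ i0) (σ i1) * ∏ p ∈ Kp.erase (i0, i1), R.ew (σ p.1) (σ p.2) :=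
    (Finset.mul_prod_erase Kp (fun p => R.ew (σ p.1) (σ p.2)) hp0).symm
  have hrest_le : ∏ p ∈ Kp.erase (i0, i1), R.ew (σ p.1) (σ p.2) ≤ (1/2:ℝ)^(Kc s - 1) := by
    calc ∏ p ∈ Kp.erase (i0, i1), R.ew (σ p.1) (σ p.2)
        ≤ ∏ _p ∈ Kp.erase (i0, i1), (1/2:ℝ) := by
          apply Finset.prod_le_prod (fun p _ => R.ew_nonneg _ _)
          intro p hp
          have hplt : p.1 < p.2 := (Finset.mem_filter.1 (Finset.mem_of_mem_erase hp)).2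
          exact hlehalf _ _ (g2.injective.ne (ne_of_lt hplt))
      _ = (1/2:ℝ)^(Kc s - 1) := by
          rw [Finset.prod_const, Finset.card_erase_of_mem hp0, hKcKp]
  have hfaceq : R.ew (σ i0) (σ i1) = R.ew u v := by rw [hg2u, hg2v]
  have hchain : (1/2:ℝ)^(Kc s) < (1/2:ℝ)^(Kc s) := by
    calc (1/2:ℝ)^(Kc s) = R.ew (σ i0) (σ i1) * ∏ p ∈ Kp.erase (i0, i1), R.ew (σ p.1) (σ p.2) := by
          rw [← hE, hsplitE]
      _ ≤ R.ew u v * (1/2:ℝ)^(Kc s - 1) := by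
          rw [hfaceq]
          exact mul_le_mul_of_nonneg_left hrest_le (R.ew_nonneg u v)
      _ < (1/2:ℝ) * (1/2:ℝ)^(Kc s - 1) := by
          apply mul_lt_mul_of_pos_right hlt (by positivity)
      _ = (1/2:ℝ)^(Kc s) := by
          conv_rhs => rw [← Nat.succ_pred_eq_of_pos hKpos]
          rw [pow_succ', Nat.pred_eq_sub_one]
  exact lt_irrefl _ hchain

end FinalAnalysis
end ClassicalScope

theorem minimal_extremal_t_eq_s_add_two {V : Type} [Fintype V]
    (s : ℕ) (hs : 3 ≤ s)
    (R : WeightedGraph V) (hfree : R.KtFree (s + 2))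
    (hmax : R.density s = piSup s (s + 2))
    (hmin : ∀ (W : Type) (_ : Fintype W) (R' : WeightedGraph W),
      R'.KtFree (s + 2) → R'.density s = piSup s (s + 2) →
        Fintype.card V ≤ Fintype.card W) :
    R.AdmitsPartition s s 1 ∧
    Fintype.card V = s ∧ (∀ v : V, R.vw v = 1 / (s : ℝ)) ∧
    (∀ u v : V, u ≠ v → R.ew u v = 1/2) := by
  have hs0 : 0 < s := by omega
  have hpi : piSup s (s+2) = cVal s := piSup_eq s hs0
  have hdens : R.density s = cVal s := by rw [hmax, hpi]
  have hle : Fintype.card V ≤ s := by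
    have h := hmin (Fin s) inferInstance (canonical s hs0) (canonical_ktFree s hs0)
      (by rw [canonical_density s hs0, hpi])
    simpa using h
  have hge : s ≤ Fintype.card V :=
    card_ge_of_density_ne_zero s R (by rw [hdens]; exact ne_of_gt (cVal_pos s hs0))
  have hcard : Fintype.card V = s := le_antisymm hle hge
  obtain ⟨hvw, hhalf⟩ := final_structure s hs R hfree hdens hcard
  have hVne : Nonempty V := Fintype.card_pos_iff.1 (by rw [hcard]; omega)
  refine ⟨⟨hcard, le_refl 1, fun _ => (0 : Fin 1), ?_, ?_, ?_, ?_, ?_, ?_, ?_⟩, hcard, hvw, hhalf⟩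
  · intro i
    obtain ⟨v⟩ := hVne
    exact ⟨v, Subsingleton.elim _ _⟩
  · exact fun u v h => Or.inl (hhalf u v h)
  · exact fun u v h => ⟨fun _ => Subsingleton.elim _ _, fun _ => hhalf u v h⟩
  · exact fun u v _ => by rw [hvw u, hvw v]
  · intro i j
    have hsub : (Finset.univ : Finset V)
        ⊆ Finset.univ.filter fun x : V => (fun _ : V => (0 : Fin 1)) x = j := by
      intro x hx
      exact Finset.mem_filter.2 ⟨hx, Subsingleton.elim _ _⟩
    calc (Finset.univ.filter fun x : V => (fun _ : V => (0 : Fin 1)) x = i).card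
        ≤ (Finset.univ : Finset V).card := Finset.card_le_card (Finset.filter_subset _ _)
      _ ≤ (Finset.univ.filter fun x : V => (fun _ : V => (0 : Fin 1)) x = j).card :=
          Finset.card_le_card hsub
      _ ≤ _ + 1 := Nat.le_succ _
  · exact fun u v _ => by rw [hvw u, hvw v]
  · left
    refine ⟨rfl, fun i => ?_⟩
    have heq : (Finset.univ.filter fun x : V => (fun _ : V => (0 : Fin 1)) x = i)
        = (Finset.univ : Finset V) :=
      Finset.filter_true_of_mem (fun x _ => Subsingleton.elim _ _)
    calc (Finset.univ.filter fun x : V => (fun _ : V => (0 : Fin 1)) x = i).card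
        = (Finset.univ : Finset V).card := congrArg Finset.card heq
      _ = s := by rw [Finset.card_univ, hcard]
end
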